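/- arXiv:1205.2858 — 4 statements merged into one kernel-verified Lean document; each statement's English description precedes it below -/
import Mathlib

section
/- Let Λ be a k-graph, Γ an l-graph, π : ℕ^k → ℕ^l a monoid homomorphism, and extend π to the linear map π̃ : ℝ^k → ℝ^l with π̃(t) = Σ_{i=1}^k t_i π(e_i). If φ : Λ → Γ is a π-quasimorphism, then there is a well-defined continuous map φ̃ : X_Λ → X_Γ given by φ̃([λ,t]) = [φ(λ), π̃(t)]. Moreover, if π' : ℕ^l → ℕ^h is another homomorphism, Σ an h-graph and φ' : Γ → Σ a π'-quasimorphism, then φ' ∘ φ is a (π' ∘ π)-quasimorphism and (φ' ∘ φ)~ = φ̃' ∘ φ̃. -/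
/-- A `k`-graph: a countable small category (objects identified with the
identity morphisms, i.e. the morphisms of degree `0`) equipped with a degree
functor `d : Λ → ℕᵏ` satisfying the unique factorization property. -/
structure KGraph (k : ℕ) where
  /-- The morphisms of the category. -/
  Mor : Type
  /-- The category is countable. -/
  countable : Countable Mor
  /-- The source (domain) of a morphism, viewed as a degree-zero morphism. -/
  src : Mor → Mor
  /-- The range (codomain) of a morphism, viewed as a degree-zero morphism. -/
  rng : Mor → Mor
  /-- Composition `comp a b = a ∘ b`, meaningful when `src a = rng b`. -/
  comp : Mor → Mor → Mor
  /-- The degree functor. -/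
  deg : Mor → Fin k → ℕ
  src_src : ∀ a, src (src a) = src a
  rng_src : ∀ a, rng (src a) = src a
  src_rng : ∀ a, src (rng a) = rng a
  rng_rng : ∀ a, rng (rng a) = rng a
  deg_src : ∀ a, deg (src a) = 0
  deg_rng : ∀ a, deg (rng a) = 0
  src_comp : ∀ a b, src a = rng b → src (comp a b) = src b
  rng_comp : ∀ a b, src a = rng b → rng (comp a b) = rng a
  comp_assoc : ∀ a b c, src a = rng b → src b = rng c →
    comp (comp a b) c = comp a (comp b c)
  id_comp : ∀ a, comp (rng a) a = a
  comp_id : ∀ a, comp a (src a) = a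
  deg_comp : ∀ a b, src a = rng b → deg (comp a b) = deg a + deg b
  /-- The unique factorization property. -/
  factor : ∀ (a : Mor) (m n : Fin k → ℕ), deg a = m + n →
    ∃! p : Mor × Mor, deg p.1 = m ∧ deg p.2 = n ∧ src p.1 = rng p.2 ∧
      comp p.1 p.2 = a

namespace KGraph

variable {k : ℕ} (Λ : KGraph k)

/-- The segment `a(m,n)` of a morphism `a`, i.e. the (unique) middle factor of
`a = a(0,m) a(m,n) a(n, d(a))`; junk value `a` if no such factorization exists. -/
noncomputable def seg (a : Λ.Mor) (m n : Fin k → ℕ) : Λ.Mor :=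
  letI := Classical.propDecidable
  if h : ∃ b : Λ.Mor, Λ.deg b = n - m ∧ ∃ x y : Λ.Mor,
      Λ.deg x = m ∧ Λ.src x = Λ.rng b ∧ Λ.src b = Λ.rng y ∧
      a = Λ.comp x (Λ.comp b y)
  then h.choose else a

/-- The points `⨆_{λ ∈ Λ} {λ} × [0, d(λ)]` of which the topological
realization is a quotient; topologized as a disjoint union of subspaces of `ℝᵏ`. -/
def Points : Type :=
  Σ a : Λ.Mor, { t : Fin k → ℝ // ∀ i, 0 ≤ t i ∧ t i ≤ (Λ.deg a i : ℝ) }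

instance : TopologicalSpace Λ.Points :=
  inferInstanceAs (TopologicalSpace
    (Σ a : Λ.Mor, { t : Fin k → ℝ // ∀ i, 0 ≤ t i ∧ t i ≤ (Λ.deg a i : ℝ) }))

/-- Coordinatewise floor `⌊t⌋` (as a vector of naturals; this is the honest
floor on the relevant region `t ≥ 0`). -/
noncomputable def fl (t : Fin k → ℝ) : Fin k → ℕ := fun i => (⌊t i⌋).toNat

/-- Coordinatewise ceiling `⌈t⌉`. -/
noncomputable def ce (t : Fin k → ℝ) : Fin k → ℕ := fun i => (⌈t i⌉).toNat

/-- The fractional part `t - ⌊t⌋`. -/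
noncomputable def frac (t : Fin k → ℝ) : Fin k → ℝ := fun i => t i - ((⌊t i⌋).toNat : ℝ)

/-- The relation `(μ,s) ∼ (ν,t) ⟺ μ(⌊s⌋,⌈s⌉) = ν(⌊t⌋,⌈t⌉)` and
`s - ⌊s⌋ = t - ⌊t⌋` defining the topological realization. -/
def ptRel : Λ.Points → Λ.Points → Prop := fun p q =>
  Λ.seg p.1 (fl p.2.1) (ce p.2.1) = Λ.seg q.1 (fl q.2.1) (ce q.2.1) ∧
    frac p.2.1 = frac q.2.1

/-- `ptRel` is an equivalence relation. -/
def ptSetoid : Setoid Λ.Points where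
  r := Λ.ptRel
  iseqv := ⟨fun _ => ⟨rfl, rfl⟩, fun h => ⟨h.1.symm, h.2.symm⟩,
    fun h h' => ⟨h.1.trans h'.1, h.2.trans h'.2⟩⟩

/-- The topological realization `X_Λ` of the `k`-graph `Λ`. -/
def Real : Type := Quotient Λ.ptSetoid

instance : TopologicalSpace Λ.Real :=
  inferInstanceAs (TopologicalSpace (Quotient Λ.ptSetoid))

/-- The class `[λ, t] ∈ X_Λ` of a pair `(λ, t)` with `0 ≤ t ≤ d(λ)`. -/
def pt (a : Λ.Mor) (t : Fin k → ℝ) (h : ∀ i, 0 ≤ t i ∧ t i ≤ (Λ.deg a i : ℝ)) :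
    Λ.Real :=
  Quotient.mk Λ.ptSetoid ⟨a, ⟨t, h⟩⟩

/-- The open cube `Q_λ = {[λ,t] : t ∈ (0, d(λ))}` of a morphism `λ` (of degree
`≤ (1,…,1)`). -/
def Qcube (lam : Λ.Mor) : Set Λ.Real :=
  { x | ∃ (t : Fin k → ℝ) (h : ∀ i, 0 ≤ t i ∧ t i ≤ (Λ.deg lam i : ℝ)),
      (∀ i, Λ.deg lam i = 1 → 0 < t i ∧ t i < 1) ∧ x = Λ.pt lam t h }

/-- The `r`-skeleton `X_Λ^r` of the topological realization. -/
def skel' (G : KGraph k) : ℕ → Set G.Real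
  | 0 => ⋃ v ∈ { v : G.Mor | G.deg v = 0 }, G.Qcube v
  | (r+1) => skel' G r ∪
      ⋃ lam ∈ { lam : G.Mor | G.deg lam ≤ 1 ∧ ∑ i, G.deg lam i = r + 1 },
        G.Qcube lam

/-- The `r`-skeleton (wrapper). -/
def skel (r : ℕ) : Set Λ.Real := skel' Λ r

/-- A `k`-graph is connected if any two vertices are joined by an undirected
path of morphisms. -/
def Connected : Prop :=
  ∀ u v : Λ.Mor, Λ.deg u = 0 → Λ.deg v = 0 →
    Relation.ReflTransGen (fun x y => ∃ e : Λ.Mor,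
      (Λ.src e = x ∧ Λ.rng e = y) ∨ (Λ.src e = y ∧ Λ.rng e = x)) u v

end KGraph

/-- A morphism of `k`-graphs: a degree-preserving functor. -/
@[ext]
structure KGraphHom {k : ℕ} (Λ Γ : KGraph k) where
  toFun : Λ.Mor → Γ.Mor
  map_src : ∀ a, toFun (Λ.src a) = Γ.src (toFun a)
  map_rng : ∀ a, toFun (Λ.rng a) = Γ.rng (toFun a)
  map_comp : ∀ a b, Λ.src a = Λ.rng b →
    toFun (Λ.comp a b) = Γ.comp (toFun a) (toFun b)
  map_deg : ∀ a, Γ.deg (toFun a) = Λ.deg a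

namespace KGraphHom

variable {k : ℕ} {Λ Γ Θ : KGraph k}

/-- The identity `k`-graph morphism. -/
def id (Λ : KGraph k) : KGraphHom Λ Λ :=
  ⟨fun a => a, fun _ => rfl, fun _ => rfl, fun _ _ _ => rfl, fun _ => rfl⟩

/-- Composition of `k`-graph morphisms. -/
def comp (ψ : KGraphHom Γ Θ) (φ : KGraphHom Λ Γ) : KGraphHom Λ Θ where
  toFun := ψ.toFun ∘ φ.toFun
  map_src a := by simp [Function.comp, φ.map_src, ψ.map_src]
  map_rng a := by simp [Function.comp, φ.map_rng, ψ.map_rng]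
  map_comp a b h := by
    simp only [Function.comp]
    rw [φ.map_comp a b h, ψ.map_comp _ _ (by rw [← φ.map_src, ← φ.map_rng, h])]
  map_deg a := by simp [Function.comp, φ.map_deg, ψ.map_deg]

/-- The induced map on points `(λ, t) ↦ (φ(λ), t)`. -/
def pointMap (φ : KGraphHom Λ Γ) : Λ.Points → Γ.Points :=
  fun p => ⟨φ.toFun p.1, ⟨p.2.1, fun i => by rw [φ.map_deg]; exact p.2.2 i⟩⟩

/-- The induced map `φ̃ : X_Λ → X_Γ` on topological realizations,
`φ̃([λ,t]) = [φ(λ), t]` (defined via choice of representatives). -/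
noncomputable def real (φ : KGraphHom Λ Γ) : Λ.Real → Γ.Real :=
  fun x => Quotient.mk Γ.ptSetoid (φ.pointMap (Quotient.out x))

end KGraphHom

/-- A covering of `k`-graphs: a surjective degree-preserving functor
`p : Ω → Λ` mapping `Ωv` bijectively onto `Λp(v)` and `vΩ` bijectively onto
`p(v)Λ` for every vertex `v` of `Ω`. -/
def KGraphHom.IsCovering {k : ℕ} {Ω Λ : KGraph k} (p : KGraphHom Ω Λ) : Prop :=
  Function.Surjective p.toFun ∧
    ∀ v : Ω.Mor, Ω.deg v = 0 →
      Set.BijOn p.toFun { a | Ω.src a = v } { b | Λ.src b = p.toFun v } ∧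
      Set.BijOn p.toFun { a | Ω.rng a = v } { b | Λ.rng b = p.toFun v }

/-- A `π`-quasimorphism from a `k`-graph `Λ` to an `l`-graph `Γ`, for a monoid
homomorphism `π : ℕᵏ → ℕˡ`: a functor `φ` with `d(φ(λ)) = π(d(λ))`. -/
@[ext]
structure KGraphQHom {k l : ℕ} (Λ : KGraph k) (Γ : KGraph l)
    (π : (Fin k → ℕ) →+ (Fin l → ℕ)) where
  toFun : Λ.Mor → Γ.Mor
  map_src : ∀ a, toFun (Λ.src a) = Γ.src (toFun a)
  map_rng : ∀ a, toFun (Λ.rng a) = Γ.rng (toFun a)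
  map_comp : ∀ a b, Λ.src a = Λ.rng b →
    toFun (Λ.comp a b) = Γ.comp (toFun a) (toFun b)
  map_deg : ∀ a, Γ.deg (toFun a) = π (Λ.deg a)

/-- The linear extension `π̃ : ℝᵏ → ℝˡ` of a homomorphism `π : ℕᵏ → ℕˡ`,
`π̃(t) = ∑ i, t_i π(e_i)`. -/
noncomputable def lext {k l : ℕ} (π : (Fin k → ℕ) →+ (Fin l → ℕ))
    (t : Fin k → ℝ) : Fin l → ℝ :=
  fun j => ∑ i, t i * (π (Pi.single i 1) j : ℝ)

/-- Composition of quasimorphisms: a `π'`-quasimorphism following a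
`π`-quasimorphism is a `π' ∘ π`-quasimorphism. -/
def KGraphQHom.comp {k l h : ℕ} {Λ : KGraph k} {Γ : KGraph l} {Θ : KGraph h}
    {π : (Fin k → ℕ) →+ (Fin l → ℕ)} {π' : (Fin l → ℕ) →+ (Fin h → ℕ)}
    (ψ : KGraphQHom Γ Θ π') (φ : KGraphQHom Λ Γ π) :
    KGraphQHom Λ Θ (π'.comp π) where
  toFun := ψ.toFun ∘ φ.toFun
  map_src a := by simp [Function.comp, φ.map_src, ψ.map_src]
  map_rng a := by simp [Function.comp, φ.map_rng, ψ.map_rng]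
  map_comp a b hab := by
    simp only [Function.comp]
    rw [φ.map_comp a b hab, ψ.map_comp _ _ (by rw [← φ.map_src, ← φ.map_rng, hab])]
  map_deg a := by simp [Function.comp, φ.map_deg, ψ.map_deg]


section Aux

open KGraph

variable {k l h : ℕ}

private lemma pi_hom_apply (π : (Fin k → ℕ) →+ (Fin l → ℕ)) (m : Fin k → ℕ) (j : Fin l) :
    π m j = ∑ i, m i * π (Pi.single i 1) j := by
  have hm : m = ∑ i, m i • (Pi.single i 1 : Fin k → ℕ) := by
    conv_lhs => rw [← Finset.univ_sum_single m]
    apply Finset.sum_congr rfl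
    intro i _
    rw [← Pi.single_smul, smul_eq_mul, mul_one]
  conv_lhs => rw [hm]
  rw [map_sum, Finset.sum_apply]
  apply Finset.sum_congr rfl
  intro i _
  rw [map_nsmul, Pi.smul_apply, smul_eq_mul]

private lemma lext_nat (π : (Fin k → ℕ) →+ (Fin l → ℕ)) (m : Fin k → ℕ) (j : Fin l) :
    lext π (fun i => (m i : ℝ)) j = (π m j : ℝ) := by
  rw [lext, pi_hom_apply π m j]
  push_cast
  ring

private lemma lext_nonneg (π : (Fin k → ℕ) →+ (Fin l → ℕ)) {t : Fin k → ℝ}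
    (ht : ∀ i, 0 ≤ t i) (j : Fin l) : 0 ≤ lext π t j :=
  Finset.sum_nonneg fun i _ => mul_nonneg (ht i) (Nat.cast_nonneg _)

private lemma lext_mono (π : (Fin k → ℕ) →+ (Fin l → ℕ)) {s t : Fin k → ℝ}
    (hst : ∀ i, s i ≤ t i) (j : Fin l) : lext π s j ≤ lext π t j :=
  Finset.sum_le_sum fun i _ => mul_le_mul_of_nonneg_right (hst i) (Nat.cast_nonneg _)

private lemma lext_bound (π : (Fin k → ℕ) →+ (Fin l → ℕ)) {Λ : KGraph k} {a : Λ.Mor}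
    {t : Fin k → ℝ} (hb : ∀ i, 0 ≤ t i ∧ t i ≤ (Λ.deg a i : ℝ)) (j : Fin l) :
    0 ≤ lext π t j ∧ lext π t j ≤ (π (Λ.deg a) j : ℝ) :=
  ⟨lext_nonneg π (fun i => (hb i).1) j,
    le_trans (lext_mono π (fun i => (hb i).2) j) (le_of_eq (lext_nat π _ j))⟩

private lemma lext_comp (π : (Fin k → ℕ) →+ (Fin l → ℕ)) (π' : (Fin l → ℕ) →+ (Fin h → ℕ))
    (t : Fin k → ℝ) : lext (π'.comp π) t = lext π' (lext π t) := by
  funext j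
  simp only [lext, AddMonoidHom.comp_apply]
  have key : ∀ i : Fin k, ((π' (π (Pi.single i 1)) j : ℕ) : ℝ) =
      ∑ m, ((π (Pi.single i 1) m : ℕ) : ℝ) * ((π' (Pi.single m 1) j : ℕ) : ℝ) := by
    intro i
    rw [pi_hom_apply π' (π (Pi.single i 1)) j]
    push_cast
    ring
  simp only [key, Finset.mul_sum]
  rw [Finset.sum_comm]
  apply Finset.sum_congr rfl
  intro m _
  rw [Finset.sum_mul]
  apply Finset.sum_congr rfl
  intro i _
  ring

end Aux

section Aux2

open KGraph

variable {k l : ℕ}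

private lemma toNat_floor_add_nat {r : ℝ} (hr : 0 ≤ r) (n : ℕ) :
    (⌊(n : ℝ) + r⌋).toNat = n + (⌊r⌋).toNat := by
  rw [add_comm, Int.floor_add_natCast]
  have := Int.floor_nonneg.mpr hr
  omega

private lemma toNat_ceil_add_nat {r : ℝ} (hr : 0 ≤ r) (n : ℕ) :
    (⌈(n : ℝ) + r⌉).toNat = n + (⌈r⌉).toNat := by
  rw [add_comm, Int.ceil_add_natCast]
  have h1 : (0 : ℤ) ≤ ⌈r⌉ := Int.ceil_nonneg hr
  omega

private lemma frac_nonneg {s : Fin k → ℝ} (hs : ∀ i, 0 ≤ s i) (i : Fin k) :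
    0 ≤ KGraph.frac s i := by
  have h1 : ((⌊s i⌋).toNat : ℤ) = ⌊s i⌋ := Int.toNat_of_nonneg (Int.floor_nonneg.mpr (hs i))
  have h2 : (((⌊s i⌋).toNat : ℕ) : ℝ) = ((⌊s i⌋ : ℤ) : ℝ) := by exact_mod_cast congrArg (fun z : ℤ => (z : ℝ)) h1
  simp only [KGraph.frac, h2, sub_nonneg]
  exact Int.floor_le (s i)

private lemma frac_le_sub {s : Fin k → ℝ} (hs : ∀ i, 0 ≤ s i) (i : Fin k) :
    KGraph.frac s i ≤ ((KGraph.ce s - KGraph.fl s) i : ℝ) := by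
  have h1 : ((⌊s i⌋).toNat : ℤ) = ⌊s i⌋ := Int.toNat_of_nonneg (Int.floor_nonneg.mpr (hs i))
  have h2 : ((⌈s i⌉).toNat : ℤ) = ⌈s i⌉ := Int.toNat_of_nonneg (Int.ceil_nonneg (hs i))
  have h3 : ⌊s i⌋ ≤ ⌈s i⌉ := Int.floor_le_ceil (s i)
  have h4 : (⌊s i⌋).toNat ≤ (⌈s i⌉).toNat := by omega
  simp only [KGraph.frac, KGraph.fl, KGraph.ce, Pi.sub_apply]
  rw [Nat.cast_sub h4]
  have h5 : (((⌊s i⌋).toNat : ℕ) : ℝ) = ((⌊s i⌋ : ℤ) : ℝ) := by exact_mod_cast congrArg (fun z : ℤ => (z : ℝ)) h1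
  have h6 : (((⌈s i⌉).toNat : ℕ) : ℝ) = ((⌈s i⌉ : ℤ) : ℝ) := by exact_mod_cast congrArg (fun z : ℤ => (z : ℝ)) h2
  rw [h5, h6]
  have := Int.le_ceil (s i)
  linarith

private lemma lext_split (π : (Fin k → ℕ) →+ (Fin l → ℕ)) {s : Fin k → ℝ}
    (_hs : ∀ i, 0 ≤ s i) (j : Fin l) :
    lext π s j = ((π (KGraph.fl s) j : ℕ) : ℝ) + lext π (KGraph.frac s) j := by
  rw [← lext_nat π (KGraph.fl s) j]
  simp only [lext, ← Finset.sum_add_distrib]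
  apply Finset.sum_congr rfl
  intro i _
  rw [← add_mul]
  congr 1
  simp only [KGraph.fl, KGraph.frac]
  ring

private lemma fl_lext_apply (π : (Fin k → ℕ) →+ (Fin l → ℕ)) {s : Fin k → ℝ}
    (hs : ∀ i, 0 ≤ s i) (j : Fin l) :
    KGraph.fl (lext π s) j = π (KGraph.fl s) j + KGraph.fl (lext π (KGraph.frac s)) j := by
  simp only [KGraph.fl]
  rw [lext_split π hs j, toNat_floor_add_nat (lext_nonneg π (frac_nonneg hs) j)]

private lemma ce_lext_apply (π : (Fin k → ℕ) →+ (Fin l → ℕ)) {s : Fin k → ℝ}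
    (hs : ∀ i, 0 ≤ s i) (j : Fin l) :
    KGraph.ce (lext π s) j = π (KGraph.fl s) j + KGraph.ce (lext π (KGraph.frac s)) j := by
  simp only [KGraph.ce]
  rw [lext_split π hs j, toNat_ceil_add_nat (lext_nonneg π (frac_nonneg hs) j)]

end Aux2

section Aux3

variable {k l : ℕ}

private lemma seg_eq (Λ : KGraph k) {a b x y : Λ.Mor} {m n : Fin k → ℕ}
    (hx : Λ.deg x = m) (hbdeg : Λ.deg b = n - m)
    (hxb : Λ.src x = Λ.rng b) (hby : Λ.src b = Λ.rng y)
    (ha : a = Λ.comp x (Λ.comp b y)) : Λ.seg a m n = b := by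
  have hex : ∃ b' : Λ.Mor, Λ.deg b' = n - m ∧ ∃ x' y' : Λ.Mor,
      Λ.deg x' = m ∧ Λ.src x' = Λ.rng b' ∧ Λ.src b' = Λ.rng y' ∧
      a = Λ.comp x' (Λ.comp b' y') := ⟨b, hbdeg, x, y, hx, hxb, hby, ha⟩
  rw [KGraph.seg, dif_pos hex]
  obtain ⟨hcdeg, x', y', hx', hxc, hcy, ha'⟩ := hex.choose_spec
  set c := hex.choose with hc
  have hr : Λ.rng (Λ.comp b y) = Λ.rng b := Λ.rng_comp b y hby
  have hr' : Λ.rng (Λ.comp c y') = Λ.rng c := Λ.rng_comp c y' hcy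
  have hdegsum : Λ.deg a = m + ((n - m) + Λ.deg y) := by
    rw [ha, Λ.deg_comp x _ (hxb.trans hr.symm), Λ.deg_comp b y hby, hx, hbdeg]
  have hdegsum' : Λ.deg a = m + ((n - m) + Λ.deg y') := by
    rw [ha', Λ.deg_comp x' _ (hxc.trans hr'.symm), Λ.deg_comp c y' hcy, hx', hcdeg]
  have hyy : Λ.deg y' = Λ.deg y := by
    funext i
    have h1 := congrFun (hdegsum.symm.trans hdegsum') i
    simp only [Pi.add_apply] at h1
    omega
  obtain ⟨p, _, hup⟩ := Λ.factor a m ((n - m) + Λ.deg y) hdegsum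
  have e1 : (x, Λ.comp b y) = p := hup (x, Λ.comp b y)
    ⟨hx, by rw [Λ.deg_comp b y hby, hbdeg], hxb.trans hr.symm, ha.symm⟩
  have e2 : (x', Λ.comp c y') = p := hup (x', Λ.comp c y')
    ⟨hx', by rw [Λ.deg_comp c y' hcy, hcdeg, hyy], hxc.trans hr'.symm, ha'.symm⟩
  have e3 : Λ.comp b y = Λ.comp c y' := congrArg Prod.snd (e1.trans e2.symm)
  have hd2 : Λ.deg (Λ.comp b y) = (n - m) + Λ.deg y := by
    rw [Λ.deg_comp b y hby, hbdeg]
  obtain ⟨q, _, huq⟩ := Λ.factor (Λ.comp b y) (n - m) (Λ.deg y) hd2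
  have f1 : (b, y) = q := huq (b, y) ⟨hbdeg, rfl, hby, rfl⟩
  have f2 : (c, y') = q := huq (c, y') ⟨hcdeg, hyy, hcy, e3.symm⟩
  exact congrArg Prod.fst (f2.trans f1.symm)

private lemma exists_factor3 (Λ : KGraph k) (a : Λ.Mor) (m n : Fin k → ℕ)
    (hmn : ∀ i, m i ≤ n i) (hn : ∀ i, n i ≤ Λ.deg a i) :
    ∃ x b y : Λ.Mor, Λ.deg x = m ∧ Λ.deg b = n - m ∧ Λ.deg y = Λ.deg a - n ∧
      Λ.src x = Λ.rng b ∧ Λ.src b = Λ.rng y ∧ a = Λ.comp x (Λ.comp b y) ∧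
      Λ.seg a m n = b := by
  have h1 : Λ.deg a = m + (Λ.deg a - m) := by
    funext i
    have := hmn i; have := hn i
    simp only [Pi.add_apply, Pi.sub_apply]
    omega
  obtain ⟨p, ⟨hp1, hp2, hp3, hp4⟩, -⟩ := Λ.factor a m (Λ.deg a - m) h1
  have h2 : Λ.deg p.2 = (n - m) + (Λ.deg a - n) := by
    rw [hp2]
    funext i
    have := hmn i; have := hn i
    simp only [Pi.add_apply, Pi.sub_apply]
    omega
  obtain ⟨q, ⟨hq1, hq2, hq3, hq4⟩, -⟩ := Λ.factor p.2 (n - m) (Λ.deg a - n) h2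
  have hxb : Λ.src p.1 = Λ.rng q.1 := by
    rw [hp3, ← hq4, Λ.rng_comp q.1 q.2 hq3]
  have hfac : a = Λ.comp p.1 (Λ.comp q.1 q.2) := by
    rw [hq4]
    exact hp4.symm
  exact ⟨p.1, q.1, q.2, hp1, hq1, hq2, hxb, hq3, hfac,
    seg_eq Λ hp1 hq1 hxb hq3 hfac⟩

end Aux3

section Aux4

private lemma key_lemma {k l : ℕ} {Λ : KGraph k} {Γ : KGraph l}
    {π : (Fin k → ℕ) →+ (Fin l → ℕ)} (φ : KGraphQHom Λ Γ π)
    (a : Λ.Mor) (s : Fin k → ℝ) (hb : ∀ i, 0 ≤ s i ∧ s i ≤ (Λ.deg a i : ℝ)) :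
    Γ.seg (φ.toFun a) (KGraph.fl (lext π s)) (KGraph.ce (lext π s)) =
      Γ.seg (φ.toFun (Λ.seg a (KGraph.fl s) (KGraph.ce s)))
        (KGraph.fl (lext π (KGraph.frac s))) (KGraph.ce (lext π (KGraph.frac s))) ∧
    KGraph.frac (lext π s) = KGraph.frac (lext π (KGraph.frac s)) := by
  have hs0 : ∀ i, 0 ≤ s i := fun i => (hb i).1
  have hflce : ∀ i, KGraph.fl s i ≤ KGraph.ce s i := fun i =>
    Int.toNat_le_toNat (Int.floor_le_ceil (s i))
  have hceled : ∀ i, KGraph.ce s i ≤ Λ.deg a i := by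
    intro i
    have h1 : ⌈s i⌉ ≤ (Λ.deg a i : ℤ) := Int.ceil_le.mpr (by exact_mod_cast (hb i).2)
    exact Int.toNat_le.mpr h1
  obtain ⟨x, b, y, hxdeg, hbdeg, hydeg, hxb, hby, hfac, hsegab⟩ :=
    exists_factor3 Λ a (KGraph.fl s) (KGraph.ce s) hflce hceled
  set X := φ.toFun x with hX
  set B0 := φ.toFun b with hB0
  set Y := φ.toFun y with hY
  have hXB : Γ.src X = Γ.rng B0 := by rw [hX, hB0, ← φ.map_src, ← φ.map_rng, hxb]
  have hBY : Γ.src B0 = Γ.rng Y := by rw [hB0, hY, ← φ.map_src, ← φ.map_rng, hby]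
  have hrngBY : Γ.rng (Γ.comp B0 Y) = Γ.rng B0 := Γ.rng_comp B0 Y hBY
  have hfacφ : φ.toFun a = Γ.comp X (Γ.comp B0 Y) := by
    rw [hfac, φ.map_comp x (Λ.comp b y) (by rw [hxb, Λ.rng_comp b y hby]),
      φ.map_comp b y hby]
  have hdegB0 : Γ.deg B0 = π (KGraph.ce s - KGraph.fl s) := by
    rw [hB0, φ.map_deg, hbdeg]
  -- factor B0 at the floor/ceiling of π̃(frac s)
  set u := KGraph.fl (lext π (KGraph.frac s)) with hu
  set v := KGraph.ce (lext π (KGraph.frac s)) with hv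
  have hfr0 : ∀ i, 0 ≤ KGraph.frac s i := frac_nonneg hs0
  have hlf0 : ∀ j, 0 ≤ lext π (KGraph.frac s) j := lext_nonneg π hfr0
  have huv : ∀ j, u j ≤ v j := fun j =>
    Int.toNat_le_toNat (Int.floor_le_ceil _)
  have hvB : ∀ j, v j ≤ Γ.deg B0 j := by
    intro j
    have h1 : lext π (KGraph.frac s) j ≤
        lext π (fun i => ((KGraph.ce s - KGraph.fl s) i : ℝ)) j :=
      lext_mono π (frac_le_sub hs0) j
    have h2 : lext π (fun i => ((KGraph.ce s - KGraph.fl s) i : ℝ)) j =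
        (π (KGraph.ce s - KGraph.fl s) j : ℝ) := lext_nat π _ j
    have h3 : ⌈lext π (KGraph.frac s) j⌉ ≤ (π (KGraph.ce s - KGraph.fl s) j : ℤ) :=
      Int.ceil_le.mpr (by push_cast; exact h2 ▸ h1)
    rw [hdegB0]
    exact Int.toNat_le.mpr h3
  obtain ⟨c, B, e, hcdeg, hBdeg, hedeg, hcB, hBe, hfacB, hsegB⟩ :=
    exists_factor3 Γ B0 u v huv hvB
  -- src/rng bookkeeping
  have hcBe : Γ.src c = Γ.rng (Γ.comp B e) := by rw [Γ.rng_comp B e hBe]; exact hcB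
  have hrc : Γ.rng B0 = Γ.rng c := by rw [hfacB, Γ.rng_comp c _ hcBe]
  have hse : Γ.src B0 = Γ.src e := by
    rw [hfacB, Γ.src_comp c _ hcBe, Γ.src_comp B e hBe]
  have heY : Γ.src e = Γ.rng Y := hse.symm.trans hBY
  have hXc : Γ.src X = Γ.rng c := hXB.trans hrc
  have hBeY : Γ.src B = Γ.rng (Γ.comp e Y) := by rw [Γ.rng_comp e Y heY]; exact hBe
  have hcrest : Γ.src c = Γ.rng (Γ.comp B (Γ.comp e Y)) := by
    rw [Γ.rng_comp B _ hBeY]; exact hcB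
  have hBeRngY : Γ.src (Γ.comp B e) = Γ.rng Y := by
    rw [Γ.src_comp B e hBe]; exact heY
  -- rearrange the factorization
  have hfacφ2 : φ.toFun a = Γ.comp (Γ.comp X c) (Γ.comp B (Γ.comp e Y)) := by
    rw [hfacφ, hfacB, Γ.comp_assoc c (Γ.comp B e) Y hcBe hBeRngY,
      Γ.comp_assoc B e Y hBe heY, ← Γ.comp_assoc X c _ hXc hcrest]
  -- degree computations
  have hXc_deg : Γ.deg (Γ.comp X c) = KGraph.fl (lext π s) := by
    rw [Γ.deg_comp X c hXc, hX, φ.map_deg, hxdeg, hcdeg]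
    funext j
    rw [Pi.add_apply, fl_lext_apply π hs0 j]
  have hBdeg' : Γ.deg B = KGraph.ce (lext π s) - KGraph.fl (lext π s) := by
    rw [hBdeg]
    funext j
    have h1 := fl_lext_apply π hs0 j
    have h2 := ce_lext_apply π hs0 j
    simp only [hu, hv, Pi.sub_apply] at *
    omega
  have hsegfinal : Γ.seg (φ.toFun a) (KGraph.fl (lext π s)) (KGraph.ce (lext π s)) = B :=
    seg_eq Γ hXc_deg hBdeg' (by rw [Γ.src_comp X c hXc]; exact hcB) hBeY hfacφ2
  constructor
  · rw [hsegfinal, hsegab, ← hB0]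
    exact hsegB.symm
  · funext j
    simp only [KGraph.frac]
    have h1 : (⌊lext π s j⌋).toNat = π (KGraph.fl s) j + (⌊lext π (KGraph.frac s) j⌋).toNat := by
      have := fl_lext_apply π hs0 j
      simpa [KGraph.fl] using this
    rw [h1, lext_split π hs0 j]
    push_cast
    ring

end Aux4
/-- A `π`-quasimorphism `φ : Λ → Γ` induces a (unique)
well-defined continuous map `φ̃ : X_Λ → X_Γ` with `φ̃([λ,t]) = [φ(λ), π̃(t)]`;
moreover `φ' ∘ φ` is a `π' ∘ π`-quasimorphism (this is `KGraphQHom.comp`) and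
`(φ' ∘ φ)~ = φ̃' ∘ φ̃`. -/
theorem quasimorphism_induces_continuous_map
    {k l h : ℕ} (Λ : KGraph k) (Γ : KGraph l) (Θ : KGraph h)
    (π : (Fin k → ℕ) →+ (Fin l → ℕ)) (π' : (Fin l → ℕ) →+ (Fin h → ℕ))
    (φ : KGraphQHom Λ Γ π) (φ' : KGraphQHom Γ Θ π') :
    (∃! F : C(Λ.Real, Γ.Real),
      ∀ (a : Λ.Mor) (t : Fin k → ℝ)
        (hb : ∀ i, 0 ≤ t i ∧ t i ≤ (Λ.deg a i : ℝ))
        (hb' : ∀ j, 0 ≤ lext π t j ∧ lext π t j ≤ (Γ.deg (φ.toFun a) j : ℝ)),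
        F (Λ.pt a t hb) = Γ.pt (φ.toFun a) (lext π t) hb') ∧
    (∀ (F : C(Λ.Real, Γ.Real)) (F' : C(Γ.Real, Θ.Real)) (F'' : C(Λ.Real, Θ.Real)),
      (∀ (a : Λ.Mor) (t : Fin k → ℝ)
        (hb : ∀ i, 0 ≤ t i ∧ t i ≤ (Λ.deg a i : ℝ))
        (hb' : ∀ j, 0 ≤ lext π t j ∧ lext π t j ≤ (Γ.deg (φ.toFun a) j : ℝ)),
        F (Λ.pt a t hb) = Γ.pt (φ.toFun a) (lext π t) hb') →
      (∀ (b : Γ.Mor) (t : Fin l → ℝ)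
        (hb : ∀ j, 0 ≤ t j ∧ t j ≤ (Γ.deg b j : ℝ))
        (hb' : ∀ j, 0 ≤ lext π' t j ∧ lext π' t j ≤ (Θ.deg (φ'.toFun b) j : ℝ)),
        F' (Γ.pt b t hb) = Θ.pt (φ'.toFun b) (lext π' t) hb') →
      (∀ (a : Λ.Mor) (t : Fin k → ℝ)
        (hb : ∀ i, 0 ≤ t i ∧ t i ≤ (Λ.deg a i : ℝ))
        (hb' : ∀ j, 0 ≤ lext (π'.comp π) t j ∧
          lext (π'.comp π) t j ≤ (Θ.deg ((φ'.comp φ).toFun a) j : ℝ)),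
        F'' (Λ.pt a t hb) = Θ.pt ((φ'.comp φ).toFun a) (lext (π'.comp π) t) hb') →
      ∀ x : Λ.Real, F'' x = F' (F x)) := by

  classical
  -- the induced map on points
  have hbound : ∀ p : Λ.Points, ∀ j : Fin l,
      0 ≤ lext π p.2.1 j ∧ lext π p.2.1 j ≤ (Γ.deg (φ.toFun p.1) j : ℝ) := by
    intro p j
    rw [φ.map_deg]
    exact lext_bound π p.2.2 j
  set G : Λ.Points → Γ.Points :=
    fun p => ⟨φ.toFun p.1, ⟨lext π p.2.1, hbound p⟩⟩ with hGdef
  have hsound : ∀ p q : Λ.Points, Λ.ptRel p q → Γ.ptRel (G p) (G q) := by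
    rintro ⟨a, s, hs⟩ ⟨a', t, ht⟩ ⟨h1, h2⟩
    obtain ⟨k1, k2⟩ := key_lemma φ a s hs
    obtain ⟨k1', k2'⟩ := key_lemma φ a' t ht
    constructor
    · show Γ.seg (φ.toFun a) _ _ = Γ.seg (φ.toFun a') _ _
      rw [k1, k1', h1, h2]
    · show KGraph.frac (lext π s) = KGraph.frac (lext π t)
      rw [k2, k2', h2]
  have hG : Continuous G := by
    apply continuous_sigma
    intro a
    have hcont : Continuous fun p : { t : Fin k → ℝ // ∀ i, 0 ≤ t i ∧ t i ≤ (Λ.deg a i : ℝ) } =>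
        lext π p.1 := by
      apply continuous_pi
      intro j
      simp only [lext]
      exact continuous_finset_sum _ fun i _ =>
        ((continuous_apply i).comp continuous_subtype_val).mul continuous_const
    have step : Continuous fun p : { t : Fin k → ℝ // ∀ i, 0 ≤ t i ∧ t i ≤ (Λ.deg a i : ℝ) } =>
        (⟨lext π p.1, hbound ⟨a, p⟩⟩ :
          { t : Fin l → ℝ // ∀ j, 0 ≤ t j ∧ t j ≤ (Γ.deg (φ.toFun a) j : ℝ) }) :=
      hcont.subtype_mk _
    exact ((continuous_sigmaMk
      (σ := fun b : Γ.Mor => { t : Fin l → ℝ // ∀ j, 0 ≤ t j ∧ t j ≤ (Γ.deg b j : ℝ) })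
      (i := φ.toFun a)).comp step : _)
  let F0 : C(Λ.Real, Γ.Real) :=
    ⟨Quotient.lift (fun p => Quotient.mk Γ.ptSetoid (G p))
      (fun p q hpq => Quotient.sound (hsound p q hpq)),
      Continuous.quotient_lift (continuous_quot_mk.comp hG) _⟩
  have hF0 : ∀ (a : Λ.Mor) (t : Fin k → ℝ)
      (hb : ∀ i, 0 ≤ t i ∧ t i ≤ (Λ.deg a i : ℝ))
      (hb' : ∀ j, 0 ≤ lext π t j ∧ lext π t j ≤ (Γ.deg (φ.toFun a) j : ℝ)),
      F0 (Λ.pt a t hb) = Γ.pt (φ.toFun a) (lext π t) hb' := by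
    intro a t hb hb'
    rfl
  constructor
  · refine ⟨F0, hF0, ?_⟩
    intro F hF
    apply ContinuousMap.ext
    intro x
    induction x using Quotient.ind with
    | _ p =>
      obtain ⟨a, t, hbp⟩ := p
      have hb' : ∀ j, 0 ≤ lext π t j ∧ lext π t j ≤ (Γ.deg (φ.toFun a) j : ℝ) := by
        intro j; rw [φ.map_deg]; exact lext_bound π hbp j
      exact (hF a t hbp hb').trans (hF0 a t hbp hb').symm
  · intro F F' F'' hF hF' hF'' x
    induction x using Quotient.ind with
    | _ p =>
      obtain ⟨a, t, hbp⟩ := p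
      have hb1 : ∀ j, 0 ≤ lext π t j ∧ lext π t j ≤ (Γ.deg (φ.toFun a) j : ℝ) := by
        intro j; rw [φ.map_deg]; exact lext_bound π hbp j
      have hb2 : ∀ j, 0 ≤ lext π' (lext π t) j ∧
          lext π' (lext π t) j ≤ (Θ.deg (φ'.toFun (φ.toFun a)) j : ℝ) := by
        intro j; rw [φ'.map_deg]; exact lext_bound π' hb1 j
      have hb3 : ∀ j, 0 ≤ lext (π'.comp π) t j ∧
          lext (π'.comp π) t j ≤ (Θ.deg ((φ'.comp φ).toFun a) j : ℝ) := by
        intro j; rw [(φ'.comp φ).map_deg]; exact lext_bound (π'.comp π) hbp j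
      show F'' (Λ.pt a t hbp) = F' (F (Λ.pt a t hbp))
      rw [hF'' a t hbp hb3, hF a t hbp hb1, hF' (φ.toFun a) (lext π t) hb1 hb2]
      have hteq : lext (π'.comp π) t = lext π' (lext π t) := lext_comp π π' t
      show Θ.pt ((φ'.comp φ).toFun a) (lext (π'.comp π) t) hb3 =
        Θ.pt (φ'.toFun (φ.toFun a)) (lext π' (lext π t)) hb2
      have hmor : (φ'.comp φ).toFun a = φ'.toFun (φ.toFun a) := rfl
      refine Quotient.sound ⟨?_, ?_⟩
      · show Θ.seg ((φ'.comp φ).toFun a) (KGraph.fl (lext (π'.comp π) t))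
            (KGraph.ce (lext (π'.comp π) t)) =
          Θ.seg (φ'.toFun (φ.toFun a)) (KGraph.fl (lext π' (lext π t)))
            (KGraph.ce (lext π' (lext π t)))
        rw [hmor, hteq]
      · show KGraph.frac (lext (π'.comp π) t) = KGraph.frac (lext π' (lext π t))
        rw [hteq]
end

section
/- Let Λ be a k-graph, Γ an l-graph, π : ℕ^k → ℕ^l a homomorphism and φ : Λ → Γ a π-quasimorphism, with induced continuous map φ̃ : X_Λ → X_Γ, φ̃([λ,t]) = [φ(λ), π̃(t)]. (1) If π is rectilinear, meaning each π(e_i) = n_i e_{j_i} for some n_i ∈ ℕ and j_i ≤ l, and φ is weakly surjective, meaning for every γ ∈ Γ there exist λ ∈ Λ and p ≤ q ≤ π(d(λ)) in ℕ^l with γ = φ(λ)(p,q), then φ̃ is surjective. (2) If k = l, π is the identity (so φ is a k-graph morphism) and φ is injective, then φ̃ is injective. -/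
namespace KGraph

variable {k : ℕ} (G : KGraph k)

/-- The witness predicate defining `seg`. -/
def SegW (a : G.Mor) (m n : Fin k → ℕ) (b : G.Mor) : Prop :=
  G.deg b = n - m ∧ ∃ x y : G.Mor,
    G.deg x = m ∧ G.src x = G.rng b ∧ G.src b = G.rng y ∧
    a = G.comp x (G.comp b y)

theorem segW_unique {a b b' : G.Mor} {m n : Fin k → ℕ}
    (h : G.SegW a m n b) (h' : G.SegW a m n b') : b = b' := by
  obtain ⟨hdb, x, y, hdx, hxb, hby, hab⟩ := h
  obtain ⟨hdb', x', y', hdx', hxb', hby', hab'⟩ := h'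
  have hrby : G.rng (G.comp b y) = G.rng b := G.rng_comp b y hby
  have hrby' : G.rng (G.comp b' y') = G.rng b' := G.rng_comp b' y' hby'
  have hdeg : G.deg a = m + ((n - m) + G.deg y) := by
    rw [hab, G.deg_comp x _ (hxb.trans hrby.symm), G.deg_comp b y hby, hdx, hdb]
  have hdeg' : G.deg a = m + ((n - m) + G.deg y') := by
    rw [hab', G.deg_comp x' _ (hxb'.trans hrby'.symm), G.deg_comp b' y' hby',
      hdx', hdb']
  have hyy : G.deg y = G.deg y' := by
    have h0 := hdeg.symm.trans hdeg'
    funext i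
    have := congrFun h0 i
    simp only [Pi.add_apply] at this
    omega
  obtain ⟨P, hP, hPu⟩ := G.factor a m ((n - m) + G.deg y) hdeg
  have h1 : (x, G.comp b y) = P :=
    hPu _ ⟨hdx, by rw [G.deg_comp b y hby, hdb], hxb.trans hrby.symm, hab.symm⟩
  have h2 : (x', G.comp b' y') = P :=
    hPu _ ⟨hdx', by rw [G.deg_comp b' y' hby', hdb', hyy],
      hxb'.trans hrby'.symm, hab'.symm⟩
  have hc : G.comp b y = G.comp b' y' := congrArg Prod.snd (h1.trans h2.symm)
  obtain ⟨Q, hQ, hQu⟩ := G.factor (G.comp b y) (n - m) (G.deg y)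
    (by rw [G.deg_comp b y hby, hdb])
  have h3 : (b, y) = Q := hQu _ ⟨hdb, rfl, hby, rfl⟩
  have h4 : (b', y') = Q := hQu _ ⟨hdb', hyy.symm, hby', hc.symm⟩
  exact congrArg Prod.fst (h3.trans h4.symm)

theorem seg_spec {a : G.Mor} {m n : Fin k → ℕ} (he : ∃ b, G.SegW a m n b) :
    G.SegW a m n (G.seg a m n) := by
  classical
  have : G.seg a m n = he.choose := by
    rw [seg]
    exact dif_pos he
  rw [this]
  exact he.choose_spec

theorem seg_eq {a b : G.Mor} {m n : Fin k → ℕ} (h : G.SegW a m n b) :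
    G.seg a m n = b :=
  G.segW_unique (G.seg_spec ⟨b, h⟩) h

theorem segW_exists {a : G.Mor} {m n : Fin k → ℕ} (hmn : m ≤ n)
    (hna : n ≤ G.deg a) : ∃ b, G.SegW a m n b := by
  have hd : G.deg a = m + ((n - m) + (G.deg a - n)) := by
    funext i
    have h1 : m i ≤ n i := hmn i
    have h2 : n i ≤ G.deg a i := hna i
    simp only [Pi.add_apply, Pi.sub_apply]
    omega
  obtain ⟨⟨x, r⟩, ⟨hdx, hdr, hxr, hcomp⟩, -⟩ := G.factor a m _ hd
  obtain ⟨⟨b, y⟩, ⟨hdb, hdy, hby, hcomp2⟩, -⟩ :=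
    G.factor r (n - m) (G.deg a - n) hdr
  refine ⟨b, hdb, x, y, hdx, ?_, hby, ?_⟩
  · rw [← hcomp2] at hxr
    rwa [G.rng_comp b y hby] at hxr
  · rw [hcomp2, hcomp]

end KGraph
namespace KGraph

variable {k : ℕ} (G : KGraph k)

theorem segW_deg {a b : G.Mor} {m n : Fin k → ℕ} (h : G.SegW a m n b) :
    G.deg b = n - m := h.1

/-- Segment of a segment: `a(p+m, p+n) = (a(p,q))(m,n)`. -/
theorem seg_shift {a c : G.Mor} {p q m n : Fin k → ℕ}
    (hpq : G.SegW a p q c) (hmn : m ≤ n) (hn : n ≤ q - p) :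
    G.seg a (p + m) (p + n) = G.seg c m n := by
  obtain ⟨hdc, X, Y, hdX, hXc, hcY, haC⟩ := hpq
  have hcb : G.SegW c m n (G.seg c m n) :=
    G.seg_spec (G.segW_exists hmn (hdc ▸ hn))
  set b := G.seg c m n with hb
  obtain ⟨hdb, x, y, hdx, hxb, hby, hcB⟩ := hcb
  -- derived range/source facts
  have hrby : G.rng (G.comp b y) = G.rng b := G.rng_comp b y hby
  have hrc : G.rng c = G.rng x := by
    rw [hcB]; exact G.rng_comp x _ (hxb.trans hrby.symm)
  have hsc : G.src c = G.src y := by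
    rw [hcB, G.src_comp x _ (hxb.trans hrby.symm), G.src_comp b y hby]
  have hyY : G.src y = G.rng Y := hsc ▸ hcY
  have hXx : G.src X = G.rng x := hXc.trans hrc
  have hryY : G.rng (G.comp y Y) = G.rng y := G.rng_comp y Y hyY
  -- re-associate
  have key : a = G.comp (G.comp X x) (G.comp b (G.comp y Y)) := by
    rw [haC, hcB]
    rw [G.comp_assoc x (G.comp b y) Y (hxb.trans hrby.symm) (by
      rw [G.src_comp b y hby]; exact hyY)]
    rw [G.comp_assoc b y Y hby hyY]
    rw [← G.comp_assoc X x (G.comp b (G.comp y Y)) hXx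
      (hxb.trans (G.rng_comp b (G.comp y Y) (hby.trans hryY.symm)).symm)]
  refine (G.seg_eq ⟨?_, G.comp X x, G.comp y Y, ?_, ?_, ?_, key⟩)
  · rw [hdb]; funext i
    simp only [Pi.add_apply, Pi.sub_apply]
    omega
  · rw [G.deg_comp X x hXx, hdX, hdx]
  · rw [G.src_comp X x hXx]
    exact hxb
  · exact hby.trans hryY.symm

theorem fl_le_ce (t : Fin k → ℝ) : fl t ≤ ce t := fun i =>
  Int.toNat_le_toNat (Int.floor_le_ceil (t i))

theorem ce_le {t : Fin k → ℝ} {d : Fin k → ℕ} (h : ∀ i, t i ≤ (d i : ℝ)) :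
    ce t ≤ d := fun i => by
  have h1 : ⌈t i⌉ ≤ (d i : ℤ) := Int.ceil_le.mpr (by exact_mod_cast h i)
  show (⌈t i⌉).toNat ≤ d i
  omega

theorem fl_add_nat (p : Fin k → ℕ) (t : Fin k → ℝ) (ht : ∀ i, 0 ≤ t i) :
    fl (fun i => (p i : ℝ) + t i) = p + fl t := by
  funext i
  have h1 : ⌊(p i : ℝ) + t i⌋ = (p i : ℤ) + ⌊t i⌋ := by
    rw [show ((p i : ℝ)) = ((p i : ℤ) : ℝ) by push_cast; ring, Int.floor_intCast_add]
  have h2 : (0:ℤ) ≤ ⌊t i⌋ := Int.floor_nonneg.mpr (ht i)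
  simp only [fl, Pi.add_apply, h1]
  omega

theorem ce_add_nat (p : Fin k → ℕ) (t : Fin k → ℝ) (ht : ∀ i, 0 ≤ t i) :
    ce (fun i => (p i : ℝ) + t i) = p + ce t := by
  funext i
  have h1 : ⌈(p i : ℝ) + t i⌉ = (p i : ℤ) + ⌈t i⌉ := by
    rw [show (p i : ℝ) + t i = t i + ((p i : ℤ) : ℝ) by push_cast; ring,
      Int.ceil_add_intCast, add_comm]
  have h2 : (0:ℤ) ≤ ⌈t i⌉ := Int.ceil_nonneg (ht i)
  simp only [ce, Pi.add_apply, h1]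
  omega

theorem frac_add_nat (p : Fin k → ℕ) (t : Fin k → ℝ) (ht : ∀ i, 0 ≤ t i) :
    frac (fun i => (p i : ℝ) + t i) = frac t := by
  funext i
  have h : fl (fun i => (p i : ℝ) + t i) i = p i + fl t i :=
    congrFun (fl_add_nat p t ht) i
  have h2 : (⌊(p i : ℝ) + t i⌋).toNat = p i + (⌊t i⌋).toNat := h
  show (p i : ℝ) + t i - ((⌊(p i : ℝ) + t i⌋).toNat : ℝ)
      = t i - ((⌊t i⌋).toNat : ℝ)
  rw [h2]
  push_cast
  ring

theorem pt_congr (a : G.Mor) {t t' : Fin k → ℝ} (h : t = t')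
    (ht : ∀ i, 0 ≤ t i ∧ t i ≤ (G.deg a i : ℝ))
    (ht' : ∀ i, 0 ≤ t' i ∧ t' i ≤ (G.deg a i : ℝ)) :
    G.pt a t ht = G.pt a t' ht' := by subst h; rfl

end KGraph

theorem lext_id {k : ℕ} (t : Fin k → ℝ) :
    lext (AddMonoidHom.id (Fin k → ℕ)) t = t := by
  funext j
  simp only [lext, AddMonoidHom.id_apply, Pi.single_apply]
  rw [Finset.sum_eq_single j]
  · simp
  · intro i _ hij
    simp [Ne.symm hij]
  · simp

theorem pi_apply_eq_sum {k l : ℕ} (π : (Fin k → ℕ) →+ (Fin l → ℕ))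
    (d : Fin k → ℕ) (j : Fin l) :
    π d j = ∑ i, d i * π (Pi.single i 1) j := by
  have hd : d = ∑ i, d i • Pi.single i (1:ℕ) := by
    funext j'
    simp [Pi.single_apply]
  have hmap : π (∑ i, d i • Pi.single i (1:ℕ))
      = ∑ i, d i • π (Pi.single i (1:ℕ)) := by
    rw [map_sum]
    exact Finset.sum_congr rfl fun i _ => map_nsmul π _ _
  calc π d j = π (∑ i, d i • Pi.single i (1:ℕ)) j := by rw [← hd]
    _ = (∑ i, d i • π (Pi.single i (1:ℕ))) j := by rw [hmap]
    _ = ∑ i, d i * π (Pi.single i 1) j := by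
        rw [Finset.sum_apply]
        simp [smul_eq_mul]
/-- A `k`-graph morphism (an `id`-quasimorphism) maps segment witnesses to
segment witnesses. -/
theorem segW_map {k : ℕ} {Λ' Γ' : KGraph k}
    (ψ : KGraphQHom Λ' Γ' (AddMonoidHom.id (Fin k → ℕ)))
    {a b : Λ'.Mor} {m n : Fin k → ℕ} (h : Λ'.SegW a m n b) :
    Γ'.SegW (ψ.toFun a) m n (ψ.toFun b) := by
  obtain ⟨hdb, x, y, hdx, hxb, hby, hab⟩ := h
  refine ⟨by simpa using (ψ.map_deg b).trans (by simpa using hdb),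
    ψ.toFun x, ψ.toFun y,
    by simpa using (ψ.map_deg x).trans (by simpa using hdx), ?_, ?_, ?_⟩
  · rw [← ψ.map_src, ← ψ.map_rng, hxb]
  · rw [← ψ.map_src, ← ψ.map_rng, hby]
  · have h1 : Λ'.src x = Λ'.rng (Λ'.comp b y) :=
      hxb.trans (Λ'.rng_comp b y hby).symm
    rw [hab, ψ.map_comp x _ h1, ψ.map_comp b y hby]
/-- Let `φ : Λ → Γ` be a `π`-quasimorphism with induced
continuous map `F = φ̃ : X_Λ → X_Γ`, `φ̃([λ,t]) = [φ(λ), π̃(t)]`.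
(1) If `π` is rectilinear (each `π(e_i) = n_i e_{j_i}`) and `φ` is weakly
surjective (every `γ ∈ Γ` is a segment `φ(λ)(p,q)` of some image), then `φ̃` is
surjective.  (2) If `k = l` and `π = id` (so `φ` is a `k`-graph morphism) and
`φ` is injective, then `φ̃` is injective. -/
theorem quasimorphism_realization_surjective_injective
    {k l : ℕ} (Λ : KGraph k) (Γ : KGraph l)
    (π : (Fin k → ℕ) →+ (Fin l → ℕ)) (φ : KGraphQHom Λ Γ π)
    (F : C(Λ.Real, Γ.Real))
    (hF : ∀ (a : Λ.Mor) (t : Fin k → ℝ)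
      (hb : ∀ i, 0 ≤ t i ∧ t i ≤ (Λ.deg a i : ℝ))
      (hb' : ∀ j, 0 ≤ lext π t j ∧ lext π t j ≤ (Γ.deg (φ.toFun a) j : ℝ)),
      F (Λ.pt a t hb) = Γ.pt (φ.toFun a) (lext π t) hb') :
    ((∀ i : Fin k, ∃ (n : ℕ) (j : Fin l), π (Pi.single i 1) = Pi.single j n) →
      (∀ γ : Γ.Mor, ∃ (lam : Λ.Mor) (p q : Fin l → ℕ),
        p ≤ q ∧ q ≤ π (Λ.deg lam) ∧ γ = Γ.seg (φ.toFun lam) p q) →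
      Function.Surjective F) ∧
    (∀ (Λ' Γ' : KGraph k)
      (ψ : KGraphQHom Λ' Γ' (AddMonoidHom.id (Fin k → ℕ)))
      (G : C(Λ'.Real, Γ'.Real)),
      (∀ (a : Λ'.Mor) (t : Fin k → ℝ)
        (hb : ∀ i, 0 ≤ t i ∧ t i ≤ (Λ'.deg a i : ℝ))
        (hb' : ∀ j, 0 ≤ lext (AddMonoidHom.id (Fin k → ℕ)) t j ∧
          lext (AddMonoidHom.id (Fin k → ℕ)) t j ≤ (Γ'.deg (ψ.toFun a) j : ℝ)),
        G (Λ'.pt a t hb) =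
          Γ'.pt (ψ.toFun a) (lext (AddMonoidHom.id (Fin k → ℕ)) t) hb') →
      Function.Injective ψ.toFun → Function.Injective G) := by
  constructor
  · -- Part 1: surjectivity
    intro hrect hws y
    refine Quotient.inductionOn y ?_
    rintro ⟨γ, t, ht⟩
    obtain ⟨lam, p, q, hpq, hqd, hγ⟩ := hws γ
    choose N J hNJ using hrect
    set d : Fin k → ℕ := Λ.deg lam with hd
    set D : Fin l → ℕ := π d with hD
    have hDeg : Γ.deg (φ.toFun lam) = D := φ.map_deg lam
    -- γ is the (p,q)-segment of φ(lam)
    have hWγ : Γ.SegW (φ.toFun lam) p q γ := by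
      rw [hγ]
      exact Γ.seg_spec (Γ.segW_exists hpq (by rw [hDeg]; exact hqd))
    have hdegγ : Γ.deg γ = q - p := Γ.segW_deg hWγ
    have ht0 : ∀ j, 0 ≤ t j := fun j => (ht j).1
    have htγ : ∀ j, t j ≤ ((q j - p j : ℕ) : ℝ) := fun j => by
      have := (ht j).2
      rwa [hdegγ] at this
    -- the shifted point u = p + t in the cube of φ(lam)
    set u : Fin l → ℝ := fun j => (p j : ℝ) + t j with hu
    have hu0 : ∀ j, 0 ≤ u j := fun j => add_nonneg (Nat.cast_nonneg _) (ht0 j)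
    have huD : ∀ j, u j ≤ (D j : ℝ) := by
      intro j
      have h1 : (p j : ℝ) + t j ≤ (p j : ℝ) + ((q j - p j : ℕ) : ℝ) := by
        linarith [htγ j]
      have h2 : (p j : ℝ) + ((q j - p j : ℕ) : ℝ) = (q j : ℝ) := by
        have hle := hpq j
        rw [Nat.cast_sub hle]
        ring
      have h3 : (q j : ℝ) ≤ (D j : ℝ) := by exact_mod_cast hqd j
      calc u j ≤ (p j : ℝ) + ((q j - p j : ℕ) : ℝ) := h1
        _ = (q j : ℝ) := h2
        _ ≤ (D j : ℝ) := h3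
    -- the preimage coordinates s
    classical
    set s : Fin k → ℝ := fun i =>
      if D (J i) = 0 then 0 else (d i : ℝ) * u (J i) / (D (J i) : ℝ) with hsdef
    have hbs : ∀ i, 0 ≤ s i ∧ s i ≤ (Λ.deg lam i : ℝ) := by
      intro i
      show 0 ≤ s i ∧ s i ≤ (d i : ℝ)
      by_cases hz : D (J i) = 0
      · simp [hsdef, hz]
      · have hpos : (0 : ℝ) < (D (J i) : ℝ) := by
          exact_mod_cast Nat.pos_of_ne_zero hz
        constructor
        · simp only [hsdef, if_neg hz]
          have h0 := hu0 (J i)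
          have : (0:ℝ) ≤ (d i : ℝ) := Nat.cast_nonneg _
          exact div_nonneg (mul_nonneg this h0) hpos.le
        · simp only [hsdef, if_neg hz]
          rw [div_le_iff₀ hpos]
          have := huD (J i)
          nlinarith [hu0 (J i), Nat.cast_nonneg (α := ℝ) (d i)]
    -- key computation: lext π s = u
    have hlext : lext π s = u := by
      funext j
      have hsum : (D j : ℝ) = ∑ i, (d i : ℝ) * ((π (Pi.single i 1) j : ℕ) : ℝ) := by
        rw [hD]
        rw [pi_apply_eq_sum π d j]
        push_cast
        rfl
      by_cases hz : D j = 0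
      · have huj : u j = 0 := le_antisymm
          (by have hh := huD j; rw [hz] at hh; simpa using hh) (hu0 j)
        rw [huj]
        rw [lext]
        refine Finset.sum_eq_zero fun i _ => ?_
        by_cases hJ : J i = j
        · have : D (J i) = 0 := by rw [hJ]; exact hz
          simp [hsdef, this]
        · have : π (Pi.single i 1) j = 0 := by
            rw [hNJ i, Pi.single_apply, if_neg (fun h => hJ h.symm)]
          simp [this]
      · have hposD : (0 : ℝ) < (D j : ℝ) := by exact_mod_cast Nat.pos_of_ne_zero hz
        rw [lext]
        have hterm : ∀ i, s i * ((π (Pi.single i 1) j : ℕ) : ℝ)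
            = (u j / (D j : ℝ)) * ((d i : ℝ) * ((π (Pi.single i 1) j : ℕ) : ℝ)) := by
          intro i
          by_cases hJ : J i = j
          · have hDJ : D (J i) = D j := by rw [hJ]
            have hzJ : D (J i) ≠ 0 := by rw [hDJ]; exact hz
            have huJ : u (J i) = u j := by rw [hJ]
            simp only [hsdef, if_neg hzJ, huJ, hDJ]
            field_simp
          · have : π (Pi.single i 1) j = 0 := by
              rw [hNJ i, Pi.single_apply, if_neg (fun h => hJ h.symm)]
            simp [this]
        calc ∑ i, s i * ((π (Pi.single i 1) j : ℕ) : ℝ)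
            = ∑ i, (u j / (D j : ℝ)) * ((d i : ℝ) * ((π (Pi.single i 1) j : ℕ) : ℝ)) :=
              Finset.sum_congr rfl fun i _ => hterm i
          _ = (u j / (D j : ℝ)) * ∑ i, (d i : ℝ) * ((π (Pi.single i 1) j : ℕ) : ℝ) := by
              rw [Finset.mul_sum]
          _ = (u j / (D j : ℝ)) * (D j : ℝ) := by rw [← hsum]
          _ = u j := div_mul_cancel₀ _ (ne_of_gt hposD)
    -- bounds for the image point
    have hbu : ∀ j, 0 ≤ u j ∧ u j ≤ (Γ.deg (φ.toFun lam) j : ℝ) := fun j =>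
      ⟨hu0 j, by rw [hDeg]; exact huD j⟩
    have hb' : ∀ j, 0 ≤ lext π s j ∧ lext π s j ≤ (Γ.deg (φ.toFun lam) j : ℝ) := by
      intro j; rw [hlext]; exact hbu j
    refine ⟨Λ.pt lam s hbs, ?_⟩
    rw [hF lam s hbs hb', Γ.pt_congr (φ.toFun lam) hlext hb' hbu]
    -- finally, [φ(lam), u] = [γ, t]
    refine Quotient.sound ⟨?_, ?_⟩
    · show Γ.seg (φ.toFun lam) (KGraph.fl u) (KGraph.ce u)
        = Γ.seg γ (KGraph.fl t) (KGraph.ce t)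
      have hflu : KGraph.fl u = p + KGraph.fl t := KGraph.fl_add_nat p t ht0
      have hceu : KGraph.ce u = p + KGraph.ce t := KGraph.ce_add_nat p t ht0
      rw [hflu, hceu]
      refine Γ.seg_shift hWγ (KGraph.fl_le_ce t) ?_
      intro j
      have h1 : KGraph.ce t j ≤ Γ.deg γ j := KGraph.ce_le (fun i => (ht i).2) j
      rwa [hdegγ] at h1
    · exact KGraph.frac_add_nat p t ht0
  · -- Part 2: injectivity
    intro Λ' Γ' ψ G hG hinj x y
    refine Quotient.inductionOn₂ x y ?_
    rintro ⟨a, t, ht⟩ ⟨b, s, hs⟩ h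
    -- bounds after `lext id`
    have hbt : ∀ j, 0 ≤ lext (AddMonoidHom.id (Fin k → ℕ)) t j ∧
        lext (AddMonoidHom.id (Fin k → ℕ)) t j ≤ (Γ'.deg (ψ.toFun a) j : ℝ) := by
      intro j
      rw [lext_id t]
      refine ⟨(ht j).1, ?_⟩
      have := ψ.map_deg a
      simp only [AddMonoidHom.id_apply] at this
      rw [this]
      exact (ht j).2
    have hbs' : ∀ j, 0 ≤ lext (AddMonoidHom.id (Fin k → ℕ)) s j ∧
        lext (AddMonoidHom.id (Fin k → ℕ)) s j ≤ (Γ'.deg (ψ.toFun b) j : ℝ) := by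
      intro j
      rw [lext_id s]
      refine ⟨(hs j).1, ?_⟩
      have := ψ.map_deg b
      simp only [AddMonoidHom.id_apply] at this
      rw [this]
      exact (hs j).2
    have h1 := hG a t ht hbt
    have h2 := hG b s hs hbs'
    have hbt2 : ∀ j, 0 ≤ t j ∧ t j ≤ (Γ'.deg (ψ.toFun a) j : ℝ) := by
      intro j; have := hbt j; rwa [lext_id t] at this
    have hbs2 : ∀ j, 0 ≤ s j ∧ s j ≤ (Γ'.deg (ψ.toFun b) j : ℝ) := by
      intro j; have := hbs' j; rwa [lext_id s] at this
    rw [Γ'.pt_congr (ψ.toFun a) (lext_id t) hbt hbt2] at h1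
    rw [Γ'.pt_congr (ψ.toFun b) (lext_id s) hbs' hbs2] at h2
    have hpt : Γ'.pt (ψ.toFun a) t hbt2 = Γ'.pt (ψ.toFun b) s hbs2 := by
      rw [← h1, ← h2]; exact h
    have hrel := Quotient.exact hpt
    obtain ⟨hseg, hfrac⟩ := hrel
    -- transfer the segment equality back along ψ
    have hWa : Λ'.SegW a (KGraph.fl t) (KGraph.ce t)
        (Λ'.seg a (KGraph.fl t) (KGraph.ce t)) :=
      Λ'.seg_spec (Λ'.segW_exists (KGraph.fl_le_ce t)
        (KGraph.ce_le fun i => (ht i).2))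
    have hWb : Λ'.SegW b (KGraph.fl s) (KGraph.ce s)
        (Λ'.seg b (KGraph.fl s) (KGraph.ce s)) :=
      Λ'.seg_spec (Λ'.segW_exists (KGraph.fl_le_ce s)
        (KGraph.ce_le fun i => (hs i).2))
    have ea : Γ'.seg (ψ.toFun a) (KGraph.fl t) (KGraph.ce t)
        = ψ.toFun (Λ'.seg a (KGraph.fl t) (KGraph.ce t)) :=
      Γ'.seg_eq (segW_map ψ hWa)
    have eb : Γ'.seg (ψ.toFun b) (KGraph.fl s) (KGraph.ce s)
        = ψ.toFun (Λ'.seg b (KGraph.fl s) (KGraph.ce s)) :=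
      Γ'.seg_eq (segW_map ψ hWb)
    have : ψ.toFun (Λ'.seg a (KGraph.fl t) (KGraph.ce t))
        = ψ.toFun (Λ'.seg b (KGraph.fl s) (KGraph.ce s)) := by
      rw [← ea, ← eb]; exact hseg
    exact Quotient.sound ⟨hinj this, hfrac⟩
end

section
/- Let φ, ψ : Λ → Γ be morphisms of k-graphs. If the induced continuous maps on topological realizations coincide, φ̃ = ψ̃ : X_Λ → X_Γ, then φ = ψ. In other words, the topological realization functor is faithful. -/
/-- Key lemma: the segment `a(0, d(a))` of a morphism `a` is `a` itself. -/
lemma KGraph.seg_self {k : ℕ} (Λ : KGraph k) (a : Λ.Mor) :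
    Λ.seg a 0 (Λ.deg a) = a := by
  classical
  have hex : ∃ b : Λ.Mor, Λ.deg b = Λ.deg a - 0 ∧ ∃ x y : Λ.Mor,
      Λ.deg x = 0 ∧ Λ.src x = Λ.rng b ∧ Λ.src b = Λ.rng y ∧
      a = Λ.comp x (Λ.comp b y) := by
    refine ⟨a, by simp, Λ.rng a, Λ.src a, Λ.deg_rng a, (Λ.src_rng a), (Λ.rng_src a).symm, ?_⟩
    rw [Λ.comp_id, Λ.id_comp]
  rw [KGraph.seg, dif_pos hex]
  obtain ⟨hdb, x, y, hdx, hsx, hsb, heq⟩ := hex.choose_spec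
  set b := hex.choose with hb
  have hdb' : Λ.deg b = Λ.deg a := by simpa using hdb
  have hrby : Λ.rng (Λ.comp b y) = Λ.rng b := Λ.rng_comp b y hsb
  have hsx' : Λ.src x = Λ.rng (Λ.comp b y) := hsx.trans hrby.symm
  have hdy : Λ.deg y = 0 := by
    have h1 : Λ.deg a = Λ.deg x + (Λ.deg b + Λ.deg y) := by
      rw [heq, Λ.deg_comp x _ hsx', Λ.deg_comp b y hsb]
    funext i
    have := congrFun h1 i
    simp only [Pi.add_apply, hdx, Pi.zero_apply, congrFun hdb' i] at this
    simpa using this.symm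
  obtain ⟨p, hp, hu⟩ := Λ.factor a 0 (Λ.deg a) (by simp)
  have h1 := hu (x, Λ.comp b y)
    ⟨hdx, by rw [Λ.deg_comp b y hsb, hdb', hdy, add_zero], hsx', heq.symm⟩
  have h2 := hu (Λ.rng a, a) ⟨Λ.deg_rng a, rfl, Λ.src_rng a, Λ.id_comp a⟩
  have hby : Λ.comp b y = a := congrArg Prod.snd (h1.trans h2.symm)
  obtain ⟨q, hq, hu2⟩ := Λ.factor a (Λ.deg a) 0 (by simp)
  have h3 := hu2 (b, y) ⟨hdb', hdy, hsb, hby⟩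
  have h4 := hu2 (a, Λ.src a) ⟨rfl, Λ.deg_src a, (Λ.rng_src a).symm, Λ.comp_id a⟩
  exact congrArg Prod.fst (h3.trans h4.symm)

/-- If `φ, ψ : Λ → Γ` are `k`-graph morphisms whose induced
continuous maps `φ̃, ψ̃ : X_Λ → X_Γ` (characterized by `φ̃([λ,t]) = [φ(λ),t]`)
coincide, then `φ = ψ`: topological realization is a faithful functor. -/
theorem realization_faithful
    {k : ℕ} (Λ Γ : KGraph k) (φ ψ : KGraphHom Λ Γ)
    (F G : C(Λ.Real, Γ.Real))
    (hF : ∀ (a : Λ.Mor) (t : Fin k → ℝ)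
      (hb : ∀ i, 0 ≤ t i ∧ t i ≤ (Λ.deg a i : ℝ))
      (hb' : ∀ i, 0 ≤ t i ∧ t i ≤ (Γ.deg (φ.toFun a) i : ℝ)),
      F (Λ.pt a t hb) = Γ.pt (φ.toFun a) t hb')
    (hG : ∀ (a : Λ.Mor) (t : Fin k → ℝ)
      (hb : ∀ i, 0 ≤ t i ∧ t i ≤ (Λ.deg a i : ℝ))
      (hb' : ∀ i, 0 ≤ t i ∧ t i ≤ (Γ.deg (ψ.toFun a) i : ℝ)),
      G (Λ.pt a t hb) = Γ.pt (ψ.toFun a) t hb')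
    (h : ∀ x : Λ.Real, F x = G x) :
    φ = ψ := by
  classical
  -- Base case: morphisms of degree ≤ (1,…,1).
  have base : ∀ a : Λ.Mor, (∀ i, Λ.deg a i ≤ 1) → φ.toFun a = ψ.toFun a := by
    intro a hle
    set t : Fin k → ℝ := fun i => (Λ.deg a i : ℝ) / 2 with ht
    have hb : ∀ i, 0 ≤ t i ∧ t i ≤ (Λ.deg a i : ℝ) := by
      intro i; constructor
      · positivity
      · simp only [ht]; nlinarith [Nat.cast_nonneg (α := ℝ) (Λ.deg a i)]
    have hbφ : ∀ i, 0 ≤ t i ∧ t i ≤ (Γ.deg (φ.toFun a) i : ℝ) := by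
      intro i; rw [φ.map_deg]; exact hb i
    have hbψ : ∀ i, 0 ≤ t i ∧ t i ≤ (Γ.deg (ψ.toFun a) i : ℝ) := by
      intro i; rw [ψ.map_deg]; exact hb i
    have hFG := h (Λ.pt a t hb)
    rw [hF a t hb hbφ, hG a t hb hbψ] at hFG
    have hrel : Γ.ptRel ⟨φ.toFun a, ⟨t, hbφ⟩⟩ ⟨ψ.toFun a, ⟨t, hbψ⟩⟩ :=
      Quotient.exact hFG
    have hhalf_floor : ⌊(2⁻¹ : ℝ)⌋ = 0 := by
      rw [Int.floor_eq_zero_iff]; constructor <;> norm_num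
    have hhalf_ceil : ⌈(2⁻¹ : ℝ)⌉ = 1 := by
      exact Int.ceil_eq_iff.mpr (by norm_num)
    have hfl : KGraph.fl t = 0 := by
      funext i
      have h01 : Λ.deg a i = 0 ∨ Λ.deg a i = 1 := by have := hle i; omega
      rcases h01 with h0 | h1
      · simp [KGraph.fl, ht, h0]
      · simp [KGraph.fl, ht, h1, hhalf_floor]
    have hce : KGraph.ce t = Λ.deg a := by
      funext i
      have h01 : Λ.deg a i = 0 ∨ Λ.deg a i = 1 := by have := hle i; omega
      rcases h01 with h0 | h1
      · simp [KGraph.ce, ht, h0]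
      · simp [KGraph.ce, ht, h1, hhalf_ceil]
    have hseg := hrel.1
    simp only [hfl, hce] at hseg
    rw [show Λ.deg a = Γ.deg (φ.toFun a) from (φ.map_deg a).symm, Γ.seg_self] at hseg
    rw [hseg, show Γ.deg (φ.toFun a) = Γ.deg (ψ.toFun a) by
      rw [φ.map_deg, ψ.map_deg], Γ.seg_self]
  -- Induction on total degree.
  have key : ∀ n : ℕ, ∀ a : Λ.Mor, ∑ i, Λ.deg a i = n → φ.toFun a = ψ.toFun a := by
    intro n
    induction n using Nat.strong_induction_on with
    | _ n ih =>
      intro a hn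
      by_cases hle : ∀ i, Λ.deg a i ≤ 1
      · exact base a hle
      · push_neg at hle
        obtain ⟨i, hi⟩ := hle
        have hin : Λ.deg a i ≤ n := hn ▸
          Finset.single_le_sum (fun j _ => Nat.zero_le _) (Finset.mem_univ i)
        have hn2 : 2 ≤ n := le_trans hi hin
        set e : Fin k → ℕ := fun j => if j = i then 1 else 0 with he
        have hfac : Λ.deg a = e + (Λ.deg a - e) := by
          funext j
          by_cases hj : j = i <;> simp [he, hj] <;> omega
        obtain ⟨⟨b, c⟩, ⟨hdb, hdc, hsrc, hcomp⟩, _⟩ :=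
          Λ.factor a e (Λ.deg a - e) hfac
        have hsb : ∑ j, Λ.deg b j = 1 := by
          rw [hdb]; simp [he]
        have hdeg : Λ.deg a = Λ.deg b + Λ.deg c := by
          rw [← hcomp, Λ.deg_comp b c hsrc]
        have hsc : ∑ j, Λ.deg c j = n - 1 := by
          have : n = ∑ j, Λ.deg b j + ∑ j, Λ.deg c j := by
            rw [← Finset.sum_add_distrib, ← hn]
            exact Finset.sum_congr rfl fun j _ => congrFun hdeg j
          omega
        calc φ.toFun a = Γ.comp (φ.toFun b) (φ.toFun c) := by
              rw [← hcomp, φ.map_comp b c hsrc]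
          _ = Γ.comp (ψ.toFun b) (ψ.toFun c) := by
              rw [ih 1 (by omega) b hsb, ih (n - 1) (by omega) c hsc]
          _ = ψ.toFun a := by rw [← ψ.map_comp b c hsrc, hcomp]
  ext a
  exact key (∑ i, Λ.deg a i) a rfl
end

section
/- Let p : Ω → Λ be a covering of connected k-graphs. Then the induced continuous map p̃ : X_Ω → X_Λ, p̃([ω,t]) = [p(ω),t], is a topological covering map: every point of X_Λ has an open neighborhood U such that p̃⁻¹(U) is a disjoint union of open sets each mapped homeomorphically onto U by p̃. -/
namespace KGraph

variable {k : ℕ} (Λ : KGraph k)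

section Factorization

variable {k : ℕ} {Λ : KGraph k}

/-- Uniqueness of three-fold factorizations. -/
theorem fact3_unique {a x₁ b₁ y₁ x₂ b₂ y₂ : Λ.Mor}
    (hx₁ : Λ.src x₁ = Λ.rng b₁) (hy₁ : Λ.src b₁ = Λ.rng y₁)
    (hx₂ : Λ.src x₂ = Λ.rng b₂) (hy₂ : Λ.src b₂ = Λ.rng y₂)
    (ha₁ : a = Λ.comp x₁ (Λ.comp b₁ y₁)) (ha₂ : a = Λ.comp x₂ (Λ.comp b₂ y₂))
    (hdx : Λ.deg x₁ = Λ.deg x₂) (hdb : Λ.deg b₁ = Λ.deg b₂) :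
    x₁ = x₂ ∧ b₁ = b₂ ∧ y₁ = y₂ := by
  have hsx₁ : Λ.src x₁ = Λ.rng (Λ.comp b₁ y₁) := by rw [Λ.rng_comp _ _ hy₁, hx₁]
  have hsx₂ : Λ.src x₂ = Λ.rng (Λ.comp b₂ y₂) := by rw [Λ.rng_comp _ _ hy₂, hx₂]
  have hd₁ : Λ.deg a = Λ.deg x₁ + (Λ.deg b₁ + Λ.deg y₁) := by
    rw [ha₁, Λ.deg_comp _ _ hsx₁, Λ.deg_comp _ _ hy₁]
  have hd₂ : Λ.deg a = Λ.deg x₂ + (Λ.deg b₂ + Λ.deg y₂) := by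
    rw [ha₂, Λ.deg_comp _ _ hsx₂, Λ.deg_comp _ _ hy₂]
  have hdy : Λ.deg y₁ = Λ.deg y₂ := by
    have := hd₁.symm.trans hd₂
    rw [hdx, hdb] at this
    exact add_left_cancel (add_left_cancel this)
  obtain ⟨P, -, hPuniq⟩ := Λ.factor a (Λ.deg x₁) (Λ.deg b₁ + Λ.deg y₁) hd₁
  have h1 : (x₁, Λ.comp b₁ y₁) = P :=
    hPuniq _ ⟨rfl, (Λ.deg_comp _ _ hy₁), hsx₁, ha₁.symm⟩
  have h2 : (x₂, Λ.comp b₂ y₂) = P :=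
    hPuniq _ ⟨hdx.symm, by rw [Λ.deg_comp _ _ hy₂, hdb, hdy], hsx₂, ha₂.symm⟩
  have hx : x₁ = x₂ := by
    have := h1.trans h2.symm; exact congrArg Prod.fst this
  have hz : Λ.comp b₁ y₁ = Λ.comp b₂ y₂ := by
    have := h1.trans h2.symm; exact congrArg Prod.snd this
  obtain ⟨Q, -, hQuniq⟩ := Λ.factor (Λ.comp b₁ y₁) (Λ.deg b₁) (Λ.deg y₁)
    (Λ.deg_comp _ _ hy₁)
  have g1 : (b₁, y₁) = Q := hQuniq _ ⟨rfl, rfl, hy₁, rfl⟩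
  have g2 : (b₂, y₂) = Q := hQuniq _ ⟨hdb.symm, hdy.symm, hy₂, hz.symm⟩
  have := g1.trans g2.symm
  exact ⟨hx, congrArg Prod.fst this, congrArg Prod.snd this⟩

/-- Characterization of `seg` via a three-fold factorization. -/
theorem seg_eq_s12 {a x b y : Λ.Mor} {m dd : Fin k → ℕ}
    (hxb : Λ.src x = Λ.rng b) (hby : Λ.src b = Λ.rng y)
    (hdx : Λ.deg x = m) (hdb : Λ.deg b = dd)
    (ha : a = Λ.comp x (Λ.comp b y)) :
    Λ.seg a m (m + dd) = b := by
  have hsub : m + dd - m = dd := by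
    funext i; simp only [Pi.add_apply, Pi.sub_apply]; omega
  have hex : ∃ b' : Λ.Mor, Λ.deg b' = m + dd - m ∧ ∃ x' y' : Λ.Mor,
      Λ.deg x' = m ∧ Λ.src x' = Λ.rng b' ∧ Λ.src b' = Λ.rng y' ∧
      a = Λ.comp x' (Λ.comp b' y') :=
    ⟨b, by rw [hsub, hdb], x, y, hdx, hxb, hby, ha⟩
  rw [seg, dif_pos hex]
  obtain ⟨hd', x', y', hdx', hxb', hby', ha'⟩ := hex.choose_spec
  exact (fact3_unique hxb' hby' hxb hby ha' ha (by rw [hdx', hdx])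
    (by rw [hd', hsub, hdb])).2.1

/-- Existence of the three-fold factorization defining `seg`. -/
theorem seg_spec_s12 {a : Λ.Mor} {m n : Fin k → ℕ}
    (h1 : ∀ i, m i ≤ n i) (h2 : ∀ i, n i ≤ Λ.deg a i) :
    Λ.deg (Λ.seg a m n) = n - m ∧ ∃ x y : Λ.Mor,
      Λ.deg x = m ∧ Λ.src x = Λ.rng (Λ.seg a m n) ∧
      Λ.src (Λ.seg a m n) = Λ.rng y ∧
      a = Λ.comp x (Λ.comp (Λ.seg a m n) y) := by
  obtain ⟨⟨x, z⟩, ⟨hdx, hdz, hxz, hcomp⟩, -⟩ := Λ.factor a m (Λ.deg a - m)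
    (by funext i; have := h1 i; have := h2 i; simp only [Pi.add_apply, Pi.sub_apply]; omega)
  obtain ⟨⟨b, y⟩, ⟨hdb, hdy, hby, hcomp'⟩, -⟩ := Λ.factor z (n - m) (Λ.deg a - n)
    (by rw [hdz]; funext i; have := h1 i; have := h2 i; simp only [Pi.add_apply, Pi.sub_apply]; omega)
  have hxb : Λ.src x = Λ.rng b := by
    rw [hxz, ← hcomp', Λ.rng_comp _ _ hby]
  have ha : a = Λ.comp x (Λ.comp b y) := by rw [hcomp', hcomp]
  have hseg : Λ.seg a m (m + (n - m)) = b := seg_eq_s12 hxb hby hdx hdb ha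
  have hmn : m + (n - m) = n := by
    funext i; have := h1 i; simp only [Pi.add_apply, Pi.sub_apply]; omega
  rw [hmn] at hseg
  exact hseg ▸ ⟨hdb.trans rfl, x, y, hdx, hxb, hby, ha⟩

/-- `seg` of `seg`: restricting a segment. -/
theorem seg_seg {a : Λ.Mor} {m' n' m n : Fin k → ℕ}
    (h1 : ∀ i, m' i ≤ m i) (h2 : ∀ i, m i ≤ n i) (h3 : ∀ i, n i ≤ n' i)
    (h4 : ∀ i, n' i ≤ Λ.deg a i) :
    Λ.seg (Λ.seg a m' n') (m - m') (n - m') = Λ.seg a m n := by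
  set e := Λ.seg a m' n' with he
  obtain ⟨hde, x, y, hdx, hxe, hey, ha⟩ := seg_spec_s12 (a := a) (m := m') (n := n')
    (fun i => le_trans (h1 i) (le_trans (h2 i) (h3 i))) h4
  obtain ⟨hdb, u, v, hdu, hub, hbv, hee⟩ := seg_spec_s12 (a := e) (m := m - m')
    (n := n - m') (fun i => by have := h1 i; have := h2 i; simp only [Pi.sub_apply]; omega)
    (fun i => by rw [hde]; have := h2 i; have := h3 i; simp only [Pi.sub_apply]; omega)
  set b := Λ.seg e (m - m') (n - m') with hb
  have hsv : Λ.src v = Λ.rng y := by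
    have h₁ : Λ.src e = Λ.src v := by
      rw [hee, Λ.src_comp _ _ (by rw [hub, Λ.rng_comp _ _ hbv]),
        Λ.src_comp _ _ hbv]
    rw [← h₁, hey]
  have hvy : Λ.src v = Λ.rng y := hsv
  have hxu : Λ.src x = Λ.rng u := by
    have h₁ : Λ.rng e = Λ.rng u := by
      rw [hee, Λ.rng_comp _ _ (by rw [hub, Λ.rng_comp _ _ hbv])]
    rw [hxe, h₁]
  have step1 : a = Λ.comp x (Λ.comp (Λ.comp u (Λ.comp b v)) y) := by
    rw [← hee, ← ha]
  have hbvy : Λ.src (Λ.comp b v) = Λ.rng y := by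
    rw [Λ.src_comp _ _ hbv]; exact hvy
  have step2 : Λ.comp (Λ.comp u (Λ.comp b v)) y
      = Λ.comp u (Λ.comp (Λ.comp b v) y) :=
    Λ.comp_assoc u (Λ.comp b v) y (by rw [hub, Λ.rng_comp _ _ hbv]) hbvy
  have step3 : Λ.comp (Λ.comp b v) y = Λ.comp b (Λ.comp v y) :=
    Λ.comp_assoc b v y hbv hvy
  have hu_bvy : Λ.src u = Λ.rng (Λ.comp b (Λ.comp v y)) := by
    rw [Λ.rng_comp _ _ (by rw [hbv, Λ.rng_comp _ _ hvy] : Λ.src b = Λ.rng (Λ.comp v y))]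
    exact hub
  have step4 : a = Λ.comp (Λ.comp x u) (Λ.comp b (Λ.comp v y)) := by
    rw [step1, step2, step3, ← Λ.comp_assoc x u (Λ.comp b (Λ.comp v y)) hxu hu_bvy]
  have hsxu : Λ.src (Λ.comp x u) = Λ.rng b := by
    rw [Λ.src_comp _ _ hxu, hub]
  have hbvy' : Λ.src b = Λ.rng (Λ.comp v y) := by
    rw [hbv, Λ.rng_comp _ _ hvy]
  have hdxu : Λ.deg (Λ.comp x u) = m := by
    rw [Λ.deg_comp _ _ hxu, hdx, hdu]
    funext i; have := h1 i; simp only [Pi.add_apply, Pi.sub_apply]; omega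
  have hdbb : Λ.deg b = n - m := by
    rw [hdb]; funext i; have := h1 i; have := h2 i
    simp only [Pi.sub_apply]; omega
  have : Λ.seg a m (m + (n - m)) = b := seg_eq_s12 hsxu hbvy' hdxu hdbb step4
  rw [show m + (n - m) = n by
    funext i; have := h2 i; simp only [Pi.add_apply, Pi.sub_apply]; omega] at this
  exact this.symm

end Factorization

end KGraph

/-- A morphism of `k`-graphs maps `seg` to `seg` (on genuine segments). -/
theorem KGraphHom.map_seg {k : ℕ} {Ω Γ : KGraph k} (φ : KGraphHom Ω Γ)
    {a : Ω.Mor} {m n : Fin k → ℕ}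
    (h1 : ∀ i, m i ≤ n i) (h2 : ∀ i, n i ≤ Ω.deg a i) :
    φ.toFun (Ω.seg a m n) = Γ.seg (φ.toFun a) m n := by
  obtain ⟨hdb, x, y, hdx, hxb, hby, ha⟩ := KGraph.seg_spec_s12 (a := a) h1 h2
  set b := Ω.seg a m n
  have hxb' : Γ.src (φ.toFun x) = Γ.rng (φ.toFun b) := by
    rw [← φ.map_src, ← φ.map_rng, hxb]
  have hby' : Γ.src (φ.toFun b) = Γ.rng (φ.toFun y) := by
    rw [← φ.map_src, ← φ.map_rng, hby]
  have ha' : φ.toFun a = Γ.comp (φ.toFun x) (Γ.comp (φ.toFun b) (φ.toFun y)) := by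
    rw [ha, φ.map_comp _ _ (by rw [hxb, Ω.rng_comp _ _ hby]),
      φ.map_comp _ _ hby]
  have : Γ.seg (φ.toFun a) m (m + (n - m)) = φ.toFun b :=
    KGraph.seg_eq_s12 hxb' hby' (by rw [φ.map_deg, hdx]) (by rw [φ.map_deg, hdb]) ha'
  rw [show m + (n - m) = n by
    funext i; have := h1 i; simp only [Pi.add_apply, Pi.sub_apply]; omega] at this
  exact this.symm


namespace KGraph

section Coord

variable {k : ℕ}

theorem fl_apply (t : Fin k → ℝ) (i : Fin k) : fl t i = ⌊t i⌋₊ := Int.floor_toNat _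

theorem ce_apply (t : Fin k → ℝ) (i : Fin k) : ce t i = ⌈t i⌉₊ := Int.ceil_toNat _

theorem frac_def (t : Fin k → ℝ) (i : Fin k) :
    frac t i = t i - (fl t i : ℝ) := rfl

theorem frac_apply (t : Fin k → ℝ) (i : Fin k) :
    frac t i = t i - (⌊t i⌋₊ : ℝ) := by
  rw [frac_def, fl_apply]

theorem ce_eq {t : Fin k → ℝ} {i : Fin k} (h : 0 ≤ t i) :
    ce t i = fl t i + (if frac t i = 0 then 0 else 1) := by
  rw [ce_apply, fl_apply, frac_apply]
  by_cases h0 : t i - (⌊t i⌋₊ : ℝ) = 0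
  · rw [if_pos h0]
    have : t i = (⌊t i⌋₊ : ℝ) := by linarith
    rw [this]; simp
  · rw [if_neg h0]
    have h1 : (⌊t i⌋₊ : ℝ) ≤ t i := Nat.floor_le h
    have h2 : t i < ⌊t i⌋₊ + 1 := Nat.lt_floor_add_one (t i)
    have h3 : (⌊t i⌋₊ : ℝ) < t i := lt_of_le_of_ne h1
      (fun he => h0 (by rw [sub_eq_zero]; exact he.symm))
    have h4 : ⌈t i⌉₊ ≤ ⌊t i⌋₊ + 1 := Nat.ceil_le.mpr (by push_cast; linarith)
    have h5 : ⌊t i⌋₊ < ⌈t i⌉₊ := Nat.lt_ceil.mpr h3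
    omega

end Coord

/-- Geometric data describing a point in the relative interior of a cube of a
`k`-graph realization: the internal coordinate `τ` and a small radius `ε`. -/
structure CellData (k : ℕ) where
  τ : Fin k → ℝ
  ε : ℝ
  hτ0 : ∀ i, 0 ≤ τ i
  hτ1 : ∀ i, τ i < 1
  hε0 : 0 < ε
  hε4 : ε ≤ 1/4
  hετ : ∀ i, τ i ≠ 0 → 2*ε ≤ τ i ∧ τ i ≤ 1 - 2*ε

namespace CellData

variable {k : ℕ}

/-- The degree of the cell determined by the data. -/
noncomputable def dd (D : CellData k) : Fin k → ℕ := fun i => if D.τ i = 0 then 0 else 1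

/-- Which side of the occurrence a given fractional part lies on. -/
noncomputable def delta (D : CellData k) (f : Fin k → ℝ) : Fin k → ℕ :=
  fun i => if 1 - D.ε ≤ f i then 1 else 0

/-- The basic coordinatewise analysis of points `ε`-close to an occurrence. -/
theorem coord (D : CellData k) (i : Fin k) {t : ℝ} {μ : ℕ}
    (h0 : 0 ≤ t) (hcl : |t - ((μ : ℝ) + D.τ i)| < D.ε) :
    μ = ⌊t⌋₊ + (if 1 - D.ε ≤ t - (⌊t⌋₊ : ℝ) then 1 else 0) ∧
    μ + D.dd i ≤ ⌈t⌉₊ ∧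
    (D.τ i ≠ 0 → D.ε ≤ t - (⌊t⌋₊ : ℝ) ∧ t - (⌊t⌋₊ : ℝ) < 1 - D.ε) := by
  have hε0 := D.hε0; have hε4 := D.hε4
  have hτ0 := D.hτ0 i; have hτ1 := D.hτ1 i
  rw [abs_sub_lt_iff] at hcl
  obtain ⟨hcl1, hcl2⟩ := hcl
  by_cases hτ : D.τ i = 0
  · rw [hτ] at hcl1 hcl2
    by_cases hle : (μ : ℝ) ≤ t
    · have hfl : ⌊t⌋₊ = μ := by
        have h1 : μ ≤ ⌊t⌋₊ := Nat.le_floor hle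
        have h2 : ⌊t⌋₊ < μ + 1 := by
          rw [Nat.floor_lt h0]; push_cast; linarith
        omega
      have hifneg : ¬ (1 - D.ε ≤ t - (⌊t⌋₊ : ℝ)) := by
        push_neg; rw [hfl]; linarith
      refine ⟨by rw [if_neg hifneg]; omega, ?_, fun hne => absurd hτ hne⟩
      have hcle : μ ≤ ⌈t⌉₊ := Nat.cast_le.mp (le_trans hle (Nat.le_ceil t))
      simp only [dd, if_pos hτ]; omega
    · push_neg at hle
      have hμpos : 1 ≤ μ := by
        by_contra hcon
        push_neg at hcon
        have : μ = 0 := by omega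
        rw [this] at hle; push_cast at hle; linarith
      have hfl : ⌊t⌋₊ = μ - 1 := by
        have h1 : ((μ - 1 : ℕ) : ℝ) ≤ t := by
          rw [Nat.cast_sub hμpos]; push_cast; linarith
        have h2 : ⌊t⌋₊ < μ := by rw [Nat.floor_lt h0]; exact hle
        have h3 := Nat.le_floor h1
        omega
      have hifpos : 1 - D.ε ≤ t - (⌊t⌋₊ : ℝ) := by
        rw [hfl, Nat.cast_sub hμpos]; push_cast; linarith
      refine ⟨by rw [if_pos hifpos]; omega, ?_, fun hne => absurd hτ hne⟩
      have : μ - 1 < ⌈t⌉₊ := Nat.lt_ceil.mpr (by rw [Nat.cast_sub hμpos]; push_cast; linarith)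
      simp only [dd, if_pos hτ]; omega
  · obtain ⟨hτlo, hτhi⟩ := D.hετ i hτ
    have hfl : ⌊t⌋₊ = μ := by
      have h1 : (μ : ℝ) ≤ t := by linarith
      have h2 : ⌊t⌋₊ < μ + 1 := by rw [Nat.floor_lt h0]; push_cast; linarith
      have := Nat.le_floor h1; omega
    have hfr1 : D.ε ≤ t - (⌊t⌋₊ : ℝ) := by rw [hfl]; linarith
    have hfr2 : t - (⌊t⌋₊ : ℝ) < 1 - D.ε := by rw [hfl]; linarith
    refine ⟨by rw [if_neg (by push_neg; linarith)]; omega, ?_, fun _ => ⟨hfr1, hfr2⟩⟩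
    have : μ < ⌈t⌉₊ := Nat.lt_ceil.mpr (by linarith)
    simp only [dd, if_neg hτ]; omega

end CellData

/-- The `ε`-star of (occurrences of) a cell `c` inside the point space. -/
def star {k : ℕ} (G : KGraph k) (D : CellData k) (c : G.Mor) : Set G.Points :=
  {w | ∃ m : Fin k → ℕ, G.seg w.1 m (m + D.dd) = c ∧
    ∀ i, |w.2.1 i - ((m i : ℝ) + D.τ i)| < D.ε}

section StarLemmas

variable {k : ℕ} {G : KGraph k} {D : CellData k} {c : G.Mor}

theorem point_fl_le_ce (w : G.Points) (i : Fin k) : fl w.2.1 i ≤ ce w.2.1 i := by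
  rw [fl_apply, ce_apply]; exact Nat.floor_le_ceil _

theorem point_ce_le_deg (w : G.Points) (i : Fin k) : ce w.2.1 i ≤ G.deg w.1 i := by
  rw [ce_apply]; exact Nat.ceil_le.mpr (w.2.2 i).2

theorem star_analysis {w : G.Points} {m : Fin k → ℕ}
    (hm : ∀ i, |w.2.1 i - ((m i : ℝ) + D.τ i)| < D.ε) :
    (∀ i, m i = fl w.2.1 i + D.delta (frac w.2.1) i) ∧
    (∀ i, m i + D.dd i ≤ ce w.2.1 i) ∧
    (∀ i, D.τ i ≠ 0 → D.ε ≤ frac w.2.1 i ∧ frac w.2.1 i < 1 - D.ε) := by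
  have H := fun i => D.coord i (w.2.2 i).1 (hm i)
  refine ⟨fun i => ?_, fun i => ?_, fun i => ?_⟩
  · have h := (H i).1
    simp only [CellData.delta, fl_apply, frac_apply]
    rw [h]
  · rw [ce_apply]; exact (H i).2.1
  · rw [frac_apply]; exact (H i).2.2

theorem delta_dd_le {w : G.Points}
    (hfr : ∀ i, D.τ i ≠ 0 → D.ε ≤ frac w.2.1 i ∧ frac w.2.1 i < 1 - D.ε)
    (i : Fin k) :
    fl w.2.1 i + (D.delta (frac w.2.1) i + D.dd i) ≤ ce w.2.1 i := by
  have h0 := (w.2.2 i).1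
  have hce := ce_eq (t := w.2.1) (i := i) h0
  have hε0 := D.hε0; have hε4 := D.hε4
  by_cases hτ : D.τ i = 0
  · simp only [CellData.dd, if_pos hτ]
    by_cases hδ : 1 - D.ε ≤ frac w.2.1 i
    · have hne : frac w.2.1 i ≠ 0 := by intro h; rw [h] at hδ; linarith
      simp only [CellData.delta, if_pos hδ]
      rw [hce, if_neg hne]
    · simp only [CellData.delta, if_neg hδ]
      rw [hce]; split_ifs <;> omega
  · simp only [CellData.dd, if_neg hτ]
    obtain ⟨hfr1, hfr2⟩ := hfr i hτ
    have hδ : ¬ (1 - D.ε ≤ frac w.2.1 i) := by push_neg; exact hfr2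
    have hne : frac w.2.1 i ≠ 0 := by intro h; rw [h] at hfr1; linarith
    simp only [CellData.delta, if_neg hδ]
    rw [hce, if_neg hne]

theorem star_face {w : G.Points} {m : Fin k → ℕ}
    (hseg : G.seg w.1 m (m + D.dd) = c)
    (hm : ∀ i, |w.2.1 i - ((m i : ℝ) + D.τ i)| < D.ε) :
    G.seg (G.seg w.1 (fl w.2.1) (ce w.2.1)) (D.delta (frac w.2.1))
      (D.delta (frac w.2.1) + D.dd) = c := by
  obtain ⟨hA, hB, hC⟩ := star_analysis hm
  have hss := seg_seg (a := w.1) (m' := fl w.2.1) (n' := ce w.2.1)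
    (m := m) (n := m + D.dd)
    (fun i => by have := hA i; omega)
    (fun i => by simp only [Pi.add_apply]; omega)
    (fun i => by have := hB i; simp only [Pi.add_apply]; omega)
    (fun i => point_ce_le_deg w i)
  rw [show m - fl w.2.1 = D.delta (frac w.2.1) from funext fun i => by
      have := hA i; simp only [Pi.sub_apply]; omega,
    show m + D.dd - fl w.2.1 = D.delta (frac w.2.1) + D.dd from funext fun i => by
      have := hA i; simp only [Pi.sub_apply, Pi.add_apply]; omega] at hss
  rw [hss, hseg]

theorem star_mem_of_face {w : G.Points}
    (hface : G.seg (G.seg w.1 (fl w.2.1) (ce w.2.1)) (D.delta (frac w.2.1))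
      (D.delta (frac w.2.1) + D.dd) = c)
    (hfr : ∀ i, D.τ i ≠ 0 → D.ε ≤ frac w.2.1 i ∧ frac w.2.1 i < 1 - D.ε)
    (hcl : ∀ i, |frac w.2.1 i - ((D.delta (frac w.2.1) i : ℝ) + D.τ i)| < D.ε) :
    w ∈ G.star D c := by
  refine ⟨fl w.2.1 + D.delta (frac w.2.1), ?_, ?_⟩
  · have hss := seg_seg (a := w.1) (m' := fl w.2.1) (n' := ce w.2.1)
      (m := fl w.2.1 + D.delta (frac w.2.1))
      (n := fl w.2.1 + D.delta (frac w.2.1) + D.dd)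
      (fun i => by simp only [Pi.add_apply]; omega)
      (fun i => by simp only [Pi.add_apply]; omega)
      (fun i => by have := delta_dd_le hfr i; simp only [Pi.add_apply]; omega)
      (fun i => point_ce_le_deg w i)
    rw [show fl w.2.1 + D.delta (frac w.2.1) - fl w.2.1 = D.delta (frac w.2.1)
        from funext fun i => by simp only [Pi.sub_apply, Pi.add_apply]; omega,
      show fl w.2.1 + D.delta (frac w.2.1) + D.dd - fl w.2.1
          = D.delta (frac w.2.1) + D.dd
        from funext fun i => by simp only [Pi.sub_apply, Pi.add_apply]; omega] at hss
    rw [show fl w.2.1 + D.delta (frac w.2.1) + D.dd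
        = fl w.2.1 + D.delta (frac w.2.1) + D.dd from rfl] at hss
    rw [← hss]
    exact hface
  · intro i
    have harith : w.2.1 i - (((fl w.2.1 + D.delta (frac w.2.1)) i : ℝ) + D.τ i)
        = frac w.2.1 i - ((D.delta (frac w.2.1) i : ℝ) + D.τ i) := by
      rw [frac_def]
      simp only [Pi.add_apply, Nat.cast_add]
      ring
    rw [harith]
    exact hcl i

theorem star_saturated {w w' : G.Points} (hw : w ∈ G.star D c)
    (hrel : G.ptRel w' w) : w' ∈ G.star D c := by
  obtain ⟨m, hseg, hm⟩ := hw
  obtain ⟨hA, hB, hC⟩ := star_analysis hm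
  obtain ⟨hsegrel, hfracrel⟩ := hrel
  have hface := star_face hseg hm
  apply star_mem_of_face (c := c)
  · rw [hfracrel, hsegrel]
    exact hface
  · intro i h
    rw [hfracrel]
    exact hC i h
  · intro i
    rw [hfracrel]
    have harith : w.2.1 i - ((m i : ℝ) + D.τ i)
        = frac w.2.1 i - ((D.delta (frac w.2.1) i : ℝ) + D.τ i) := by
      rw [frac_def, hA i]
      push_cast
      ring
    rw [← harith]
    exact hm i

theorem points_isOpen_iff (s : Set G.Points) :
    IsOpen s ↔ ∀ a : G.Mor,
      IsOpen {st : {t : Fin k → ℝ // ∀ i, 0 ≤ t i ∧ t i ≤ (G.deg a i : ℝ)} |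
        (⟨a, st⟩ : G.Points) ∈ s} :=
  isOpen_sigma_iff

theorem star_open (G : KGraph k) (D : CellData k) (c : G.Mor) :
    IsOpen (G.star D c) := by
  rw [points_isOpen_iff]
  intro a
  have hrw : {st : {t : Fin k → ℝ // ∀ i, 0 ≤ t i ∧ t i ≤ (G.deg a i : ℝ)} |
        (⟨a, st⟩ : G.Points) ∈ G.star D c}
      = ⋃ m : Fin k → ℕ, {st : {t : Fin k → ℝ // ∀ i, 0 ≤ t i ∧ t i ≤ (G.deg a i : ℝ)} |
          G.seg a m (m + D.dd) = c ∧ ∀ i, |st.1 i - ((m i : ℝ) + D.τ i)| < D.ε} := by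
    ext st
    simp only [Set.mem_iUnion, Set.mem_setOf_eq]
    exact Iff.rfl
  rw [hrw]
  apply isOpen_iUnion
  intro m
  by_cases hc : G.seg a m (m + D.dd) = c
  · simp only [hc, true_and]
    have hrw2 : {st : {t : Fin k → ℝ // ∀ i, 0 ≤ t i ∧ t i ≤ (G.deg a i : ℝ)} |
          ∀ i, |st.1 i - ((m i : ℝ) + D.τ i)| < D.ε}
        = Subtype.val ⁻¹' (Set.pi Set.univ fun i => Metric.ball ((m i : ℝ) + D.τ i) D.ε) := by
      ext st
      simp only [Set.mem_setOf_eq, Set.mem_preimage, Set.mem_pi, Set.mem_univ,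
        Metric.mem_ball, Real.dist_eq, forall_const]
    rw [hrw2]
    exact (isOpen_set_pi Set.finite_univ fun i _ => Metric.isOpen_ball).preimage
      continuous_subtype_val
  · simp only [hc, false_and, Set.setOf_false]
    exact isOpen_empty

theorem center_mem_star {b : G.Mor} {t : Fin k → ℝ}
    (hb : ∀ i, 0 ≤ t i ∧ t i ≤ (G.deg b i : ℝ)) (hτ : D.τ = frac t) :
    (⟨b, ⟨t, hb⟩⟩ : G.Points) ∈ G.star D (G.seg b (fl t) (ce t)) := by
  refine ⟨fl t, ?_, ?_⟩
  · have hce : fl t + D.dd = ce t := by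
      funext i
      have := ce_eq (t := t) (i := i) (hb i).1
      simp only [Pi.add_apply, CellData.dd, hτ]
      split_ifs at this ⊢ <;> omega
    rw [hce]
  · intro i
    have h : t i - ((fl t i : ℝ) + D.τ i) = 0 := by
      rw [hτ, frac_def]; ring
    rw [h, abs_zero]
    exact D.hε0

theorem deg_cell {b : G.Mor} {t : Fin k → ℝ}
    (hb : ∀ i, 0 ≤ t i ∧ t i ≤ (G.deg b i : ℝ)) (hτ : D.τ = frac t) :
    G.deg (G.seg b (fl t) (ce t)) = D.dd := by
  have h1 : ∀ i, fl t i ≤ ce t i := fun i => point_fl_le_ce ⟨b, ⟨t, hb⟩⟩ i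
  have h2 : ∀ i, ce t i ≤ G.deg b i := fun i => point_ce_le_deg ⟨b, ⟨t, hb⟩⟩ i
  rw [(seg_spec_s12 h1 h2).1]
  funext i
  have := ce_eq (t := t) (i := i) (hb i).1
  simp only [Pi.sub_apply, CellData.dd, hτ]
  split_ifs at this ⊢ <;> omega

end StarLemmas

end KGraph

namespace KGraph

section QuotientGlue

variable {k : ℕ} {G : KGraph k}

theorem isOpen_real_iff (U : Set G.Real) :
    IsOpen U ↔ IsOpen (Quotient.mk G.ptSetoid ⁻¹' U) :=
  (isQuotientMap_quotient_mk').isOpen_preimage.symm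

theorem continuous_mk_real :
    Continuous (Quotient.mk G.ptSetoid : G.Points → G.Real) :=
  continuous_quotient_mk'

theorem sat_preimage_image {S : Set G.Points}
    (hS : ∀ w w', w ∈ S → G.ptRel w' w → w' ∈ S) :
    Quotient.mk G.ptSetoid ⁻¹' (Quotient.mk G.ptSetoid '' S) = S := by
  ext w
  simp only [Set.mem_preimage, Set.mem_image]
  constructor
  · rintro ⟨w', hw', he⟩
    exact hS w' w hw' (Quotient.exact he.symm)
  · exact fun hw => ⟨w, hw, rfl⟩

end QuotientGlue

end KGraph

namespace KGraphHom

variable {k : ℕ} {Ω Λ : KGraph k} {p : KGraphHom Ω Λ}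

theorem lift_src (hp : p.IsCovering) {v : Ω.Mor} (hv : Ω.deg v = 0)
    {b : Λ.Mor} (hb : Λ.src b = p.toFun v) :
    ∃! a : Ω.Mor, Ω.src a = v ∧ p.toFun a = b := by
  obtain ⟨hbij, -⟩ := hp.2 v hv
  obtain ⟨a, ha, hpa⟩ := hbij.surjOn hb
  exact ⟨a, ⟨ha, hpa⟩, fun a' ⟨ha', he'⟩ => hbij.injOn ha' ha (by rw [he', hpa])⟩

theorem lift_rng (hp : p.IsCovering) {v : Ω.Mor} (hv : Ω.deg v = 0)
    {b : Λ.Mor} (hb : Λ.rng b = p.toFun v) :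
    ∃! a : Ω.Mor, Ω.rng a = v ∧ p.toFun a = b := by
  obtain ⟨-, hbij⟩ := hp.2 v hv
  obtain ⟨a, ha, hpa⟩ := hbij.surjOn hb
  exact ⟨a, ⟨ha, hpa⟩, fun a' ⟨ha', he'⟩ => hbij.injOn ha' ha (by rw [he', hpa])⟩

/-- Unique lifting of occurrences of a cell. -/
theorem occ_lift (hp : p.IsCovering) {D : KGraph.CellData k} {c : Λ.Mor}
    {c' : Ω.Mor} (hc' : p.toFun c' = c) (hdcd : Λ.deg c = D.dd)
    {b₀ : Λ.Mor} {m : Fin k → ℕ}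
    (hmd : ∀ i, m i + D.dd i ≤ Λ.deg b₀ i)
    (hseg : Λ.seg b₀ m (m + D.dd) = c) :
    ∃! a : Ω.Mor, p.toFun a = b₀ ∧ Ω.seg a m (m + D.dd) = c' := by
  have h1 : ∀ i, m i ≤ (m + D.dd) i := fun i => by simp only [Pi.add_apply]; omega
  have h2 : ∀ i, (m + D.dd) i ≤ Λ.deg b₀ i := fun i => by
    simp only [Pi.add_apply]; exact hmd i
  obtain ⟨hdc0, x, y, hdx, hxc, hcy, hb0⟩ := KGraph.seg_spec_s12 h1 h2
  rw [hseg] at hxc hcy hb0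
  have hv : Ω.deg (Ω.src c') = 0 := Ω.deg_src c'
  have hyv : Λ.rng y = p.toFun (Ω.src c') := by
    rw [p.map_src, hc']; exact hcy.symm
  obtain ⟨y₀, ⟨hy₀r, hy₀p⟩, hy₀u⟩ := lift_rng hp hv hyv
  have hw : Ω.deg (Ω.rng c') = 0 := Ω.deg_rng c'
  have hxw : Λ.src x = p.toFun (Ω.rng c') := by
    rw [p.map_rng, hc']; exact hxc
  obtain ⟨x₀, ⟨hx₀s, hx₀p⟩, hx₀u⟩ := lift_src hp hw hxw
  have hcy' : Ω.src c' = Ω.rng y₀ := hy₀r.symm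
  have hx₀c : Ω.src x₀ = Ω.rng (Ω.comp c' y₀) := by
    rw [Ω.rng_comp _ _ hcy', hx₀s]
  have hdx₀ : Ω.deg x₀ = m := by
    rw [← p.map_deg, hx₀p, hdx]
  have hdc' : Ω.deg c' = D.dd := by
    rw [← p.map_deg, hc', hdcd]
  refine ⟨Ω.comp x₀ (Ω.comp c' y₀), ⟨?_, ?_⟩, ?_⟩
  · rw [p.map_comp _ _ hx₀c, p.map_comp _ _ hcy', hx₀p, hy₀p, hc']
    exact hb0.symm
  · exact KGraph.seg_eq_s12 hx₀s hcy' hdx₀ hdc' rfl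
  · rintro a ⟨hpa, hsega⟩
    have hda : Ω.deg a = Λ.deg b₀ := by rw [← p.map_deg, hpa]
    obtain ⟨hdca, xa, ya, hdxa, hxca, hcya, ha⟩ := KGraph.seg_spec_s12 (a := a) h1
      (fun i => by rw [hda]; exact h2 i)
    rw [hsega] at hxca hcya ha
    have hb₀' : b₀ = Λ.comp (p.toFun xa) (Λ.comp c (p.toFun ya)) := by
      rw [← hpa, ha, p.map_comp _ _ (by rw [hxca, Ω.rng_comp _ _ hcya]),
        p.map_comp _ _ hcya, hc']
    have hcond1 : Λ.src (p.toFun xa) = Λ.rng c := by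
      rw [← p.map_src, hxca, p.map_rng, hc']
    have hcond2 : Λ.src c = Λ.rng (p.toFun ya) := by
      rw [← hc', ← p.map_src, hcya, p.map_rng]
    have hfact := KGraph.fact3_unique hcond1 hcond2 hxc hcy hb₀' hb0
      (by rw [p.map_deg, hdxa, hdx]) rfl
    have hya : ya = y₀ := hy₀u ya ⟨hcya.symm, hfact.2.2⟩
    have hxa : xa = x₀ := hx₀u xa ⟨hxca, hfact.1⟩
    rw [ha, hya, hxa]

theorem star_map {D : KGraph.CellData k} {c : Λ.Mor} {c' : Ω.Mor}
    (hc' : p.toFun c' = c) {w : Ω.Points}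
    (hw : w ∈ Ω.star D c') : p.pointMap w ∈ Λ.star D c := by
  obtain ⟨m, hseg, hm⟩ := hw
  obtain ⟨hA, hB, hC⟩ := KGraph.star_analysis hm
  have hmd : ∀ i, (m + D.dd) i ≤ Ω.deg w.1 i := fun i => by
    simp only [Pi.add_apply]
    exact le_trans (hB i) (KGraph.point_ce_le_deg w i)
  refine ⟨m, ?_, hm⟩
  show Λ.seg (p.toFun w.1) m (m + D.dd) = c
  rw [← p.map_seg (fun i => by simp only [Pi.add_apply]; omega) hmd, hseg, hc']

theorem star_lift (hp : p.IsCovering) {D : KGraph.CellData k} {c : Λ.Mor}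
    {c' : Ω.Mor} (hc' : p.toFun c' = c) (hdcd : Λ.deg c = D.dd)
    {w : Λ.Points} (hw : w ∈ Λ.star D c) :
    ∃ w' : Ω.Points, w' ∈ Ω.star D c' ∧ p.pointMap w' = w := by
  obtain ⟨b₀, s, hs⟩ := w
  obtain ⟨m, hseg, hm⟩ := hw
  obtain ⟨hA, hB, hC⟩ := KGraph.star_analysis (w := ⟨b₀, ⟨s, hs⟩⟩) hm
  have hmd : ∀ i, m i + D.dd i ≤ Λ.deg b₀ i := fun i =>
    le_trans (hB i) (KGraph.point_ce_le_deg ⟨b₀, ⟨s, hs⟩⟩ i)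
  obtain ⟨a, ⟨hpa, hsega⟩, -⟩ := occ_lift hp hc' hdcd hmd hseg
  have hdeg : Ω.deg a = Λ.deg b₀ := by rw [← p.map_deg, hpa]
  refine ⟨⟨a, ⟨s, fun i => by rw [hdeg]; exact hs i⟩⟩, ⟨m, hsega, hm⟩, ?_⟩
  subst hpa
  exact congrArg (Sigma.mk _) (Subtype.ext rfl)

theorem star_inj_points (hp : p.IsCovering) {D : KGraph.CellData k}
    {c : Λ.Mor} {c' : Ω.Mor} (hc' : p.toFun c' = c) {w₁ w₂ : Ω.Points}
    (h₁ : w₁ ∈ Ω.star D c') (h₂ : w₂ ∈ Ω.star D c')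
    (hrel : Λ.ptRel (p.pointMap w₁) (p.pointMap w₂)) : Ω.ptRel w₁ w₂ := by
  obtain ⟨m₁, hseg₁, hm₁⟩ := h₁
  obtain ⟨m₂, hseg₂, hm₂⟩ := h₂
  obtain ⟨hrelseg, hrelfrac⟩ := hrel
  have hfrac : KGraph.frac w₁.2.1 = KGraph.frac w₂.2.1 := hrelfrac
  obtain ⟨hA₁, hB₁, hC₁⟩ := KGraph.star_analysis hm₁
  obtain ⟨hA₂, hB₂, hC₂⟩ := KGraph.star_analysis hm₂
  have hface₁ := KGraph.star_face hseg₁ hm₁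
  have hface₂ := KGraph.star_face hseg₂ hm₂
  refine ⟨?_, hfrac⟩
  set e₁ := Ω.seg w₁.1 (KGraph.fl w₁.2.1) (KGraph.ce w₁.2.1) with he₁
  set e₂ := Ω.seg w₂.1 (KGraph.fl w₂.2.1) (KGraph.ce w₂.2.1) with he₂
  have hpe : p.toFun e₁ = p.toFun e₂ := by
    rw [he₁, he₂,
      p.map_seg (fun i => KGraph.point_fl_le_ce w₁ i) (fun i => KGraph.point_ce_le_deg w₁ i),
      p.map_seg (fun i => KGraph.point_fl_le_ce w₂ i) (fun i => KGraph.point_ce_le_deg w₂ i)]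
    exact hrelseg
  set δ := D.delta (KGraph.frac w₁.2.1) with hδ
  have hface₂' : Ω.seg e₂ δ (δ + D.dd) = c' := by
    rw [hδ, hfrac]; exact hface₂
  have hde₁ : Ω.deg e₁ = KGraph.ce w₁.2.1 - KGraph.fl w₁.2.1 :=
    (KGraph.seg_spec_s12 (fun i => KGraph.point_fl_le_ce w₁ i)
      (fun i => KGraph.point_ce_le_deg w₁ i)).1
  have hde₂ : Ω.deg e₂ = KGraph.ce w₂.2.1 - KGraph.fl w₂.2.1 :=
    (KGraph.seg_spec_s12 (fun i => KGraph.point_fl_le_ce w₂ i)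
      (fun i => KGraph.point_ce_le_deg w₂ i)).1
  have hbd₁ : ∀ i, (δ + D.dd) i ≤ Ω.deg e₁ i := fun i => by
    rw [hde₁]
    have h := KGraph.delta_dd_le hC₁ i
    rw [← hδ] at h
    simp only [Pi.add_apply, Pi.sub_apply]
    omega
  have hbd₂ : ∀ i, (δ + D.dd) i ≤ Ω.deg e₂ i := fun i => by
    rw [hde₂]
    have h := KGraph.delta_dd_le hC₂ i
    rw [← hfrac, ← hδ] at h
    simp only [Pi.add_apply, Pi.sub_apply]
    omega
  have hdle : ∀ i, δ i ≤ (δ + D.dd) i := fun i => by simp only [Pi.add_apply]; omega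
  obtain ⟨hdb₁, u₁, v₁, hdu₁, hub₁, hbv₁, hee₁⟩ := KGraph.seg_spec_s12 (a := e₁) hdle hbd₁
  obtain ⟨hdb₂, u₂, v₂, hdu₂, hub₂, hbv₂, hee₂⟩ := KGraph.seg_spec_s12 (a := e₂) hdle hbd₂
  rw [hface₁] at hub₁ hbv₁ hee₁
  rw [hface₂'] at hub₂ hbv₂ hee₂
  -- push both decompositions of the common image down
  have hpe₁ : p.toFun e₁ = Λ.comp (p.toFun u₁) (Λ.comp c (p.toFun v₁)) := by
    rw [hee₁, p.map_comp _ _ (by rw [hub₁, Ω.rng_comp _ _ hbv₁]),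
      p.map_comp _ _ hbv₁, hc']
  have hpe₂ : p.toFun e₁ = Λ.comp (p.toFun u₂) (Λ.comp c (p.toFun v₂)) := by
    rw [hpe, hee₂, p.map_comp _ _ (by rw [hub₂, Ω.rng_comp _ _ hbv₂]),
      p.map_comp _ _ hbv₂, hc']
  have hcond₁ : Λ.src (p.toFun u₁) = Λ.rng c := by
    rw [← p.map_src, hub₁, p.map_rng, hc']
  have hcond₁' : Λ.src c = Λ.rng (p.toFun v₁) := by
    rw [← hc', ← p.map_src, hbv₁, p.map_rng]
  have hcond₂ : Λ.src (p.toFun u₂) = Λ.rng c := by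
    rw [← p.map_src, hub₂, p.map_rng, hc']
  have hcond₂' : Λ.src c = Λ.rng (p.toFun v₂) := by
    rw [← hc', ← p.map_src, hbv₂, p.map_rng]
  have hfact := KGraph.fact3_unique hcond₁ hcond₁' hcond₂ hcond₂' hpe₁ hpe₂
    (by rw [p.map_deg, p.map_deg, hdu₁, hdu₂]) rfl
  -- lift uniqueness
  have hvv : Λ.rng (p.toFun v₁) = p.toFun (Ω.src c') := by
    rw [← p.map_rng, hbv₁]
  obtain ⟨y₀, -, hyu⟩ := lift_rng hp (Ω.deg_src c') hvv
  have hv12 : v₁ = v₂ := by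
    rw [hyu v₁ ⟨hbv₁.symm, rfl⟩, hyu v₂ ⟨hbv₂.symm, hfact.2.2.symm⟩]
  have huu : Λ.src (p.toFun u₁) = p.toFun (Ω.rng c') := by
    rw [← p.map_src, hub₁]
  obtain ⟨x₀, -, hxu⟩ := lift_src hp (Ω.deg_rng c') huu
  have hu12 : u₁ = u₂ := by
    rw [hxu u₁ ⟨hub₁, rfl⟩, hxu u₂ ⟨hub₂, hfact.1.symm⟩]
  rw [hee₁, hee₂, hv12, hu12]

/-- `pointMap` is an open map. -/
theorem pointMap_isOpenMap (p : KGraphHom Ω Λ) : IsOpenMap p.pointMap := by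
  intro A hA
  rw [KGraph.points_isOpen_iff]
  intro b
  have hrw : {st : {t : Fin k → ℝ // ∀ i, 0 ≤ t i ∧ t i ≤ (Λ.deg b i : ℝ)} |
        (⟨b, st⟩ : Λ.Points) ∈ p.pointMap '' A}
      = ⋃ a : {a : Ω.Mor // p.toFun a = b},
          (fun st : {t : Fin k → ℝ // ∀ i, 0 ≤ t i ∧ t i ≤ (Λ.deg b i : ℝ)} =>
            (⟨st.1, fun i => by
              have h := st.2 i
              rwa [show ((Λ.deg b i : ℝ)) = ((Ω.deg a.1 i : ℝ)) from
                congrArg (fun n : ℕ => (n : ℝ)) (congrFun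
                  ((congrArg Λ.deg a.2.symm).trans (p.map_deg a.1)) i)] at h⟩ :
              {t : Fin k → ℝ // ∀ i, 0 ≤ t i ∧ t i ≤ (Ω.deg a.1 i : ℝ)})) ⁻¹'
            {st' | (⟨a.1, st'⟩ : Ω.Points) ∈ A} := by
    ext st
    simp only [Set.mem_setOf_eq, Set.mem_iUnion, Set.mem_preimage, Set.mem_image]
    constructor
    · rintro ⟨w, hwA, heq⟩
      obtain ⟨a', st'⟩ := w
      have h1 : p.toFun a' = b := congrArg Sigma.fst heq
      have h2 : st'.1 = st.1 := congrArg (fun z : Λ.Points => z.2.1) heq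
      refine ⟨⟨a', h1⟩, ?_⟩
      convert hwA using 2
      exact iff_of_eq (congrArg (· ∈ A) (congrArg (Sigma.mk a') (Subtype.ext h2.symm)))
    · rintro ⟨a, hmem⟩
      obtain ⟨a, ha⟩ := a
      subst ha
      exact ⟨_, hmem, congrArg (Sigma.mk _) (Subtype.ext rfl)⟩
  rw [hrw]
  apply isOpen_iUnion
  intro a
  exact ((KGraph.points_isOpen_iff A).mp hA a.1).preimage
    (Continuous.subtype_mk continuous_subtype_val _)

end KGraphHom

/-- If `p : Ω → Λ` is a covering of connected `k`-graphs,
then the induced continuous map `p̃ : X_Ω → X_Λ`, `p̃([ω,t]) = [p(ω),t]`, is a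
topological covering map: it is surjective and every point of `X_Λ` has an open
neighborhood `U` such that `p̃⁻¹(U)` is a disjoint union of open sets, each
mapped homeomorphically onto `U` by `p̃`. -/
theorem covering_realization_is_covering_map
    {k : ℕ} (Ω Λ : KGraph k) (hΩ : Ω.Connected) (hΛ : Λ.Connected)
    (p : KGraphHom Ω Λ) (hp : p.IsCovering)
    (F : C(Ω.Real, Λ.Real))
    (hF : ∀ (a : Ω.Mor) (t : Fin k → ℝ)
      (hb : ∀ i, 0 ≤ t i ∧ t i ≤ (Ω.deg a i : ℝ))
      (hb' : ∀ i, 0 ≤ t i ∧ t i ≤ (Λ.deg (p.toFun a) i : ℝ)),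
      F (Ω.pt a t hb) = Λ.pt (p.toFun a) t hb') :
    Function.Surjective F ∧
    ∀ x : Λ.Real, ∃ U : Set Λ.Real, IsOpen U ∧ x ∈ U ∧
      ∃ (ι : Type) (V : ι → Set Ω.Real),
        (⇑F ⁻¹' U = ⋃ i, V i) ∧
        (Pairwise (Function.onFun Disjoint V)) ∧
        ∀ i, IsOpen (V i) ∧
          ∃ h : ↥(V i) ≃ₜ ↥U, ∀ y : ↥(V i), (h y).1 = F y.1 := by
    classical
  have hFcomm : ∀ w : Ω.Points, F (Quotient.mk Ω.ptSetoid w)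
      = Quotient.mk Λ.ptSetoid (p.pointMap w) := by
    intro w
    obtain ⟨a, s, hs⟩ := w
    have hb' : ∀ i, 0 ≤ s i ∧ s i ≤ (Λ.deg (p.toFun a) i : ℝ) := fun i => by
      rw [p.map_deg]; exact hs i
    have h := hF a s hs hb'
    have h2 : (⟨p.toFun a, ⟨s, hb'⟩⟩ : Λ.Points) = p.pointMap ⟨a, ⟨s, hs⟩⟩ :=
      congrArg (Sigma.mk (p.toFun a)) (Subtype.ext rfl)
    exact h.trans (congrArg (Quotient.mk Λ.ptSetoid) h2)
  constructor
  · -- surjectivity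
    intro x
    obtain ⟨w, rfl⟩ := Quotient.exists_rep x
    obtain ⟨b, s, hs⟩ := w
    obtain ⟨a, rfl⟩ := hp.1 b
    have hs' : ∀ i, 0 ≤ s i ∧ s i ≤ (Ω.deg a i : ℝ) := fun i => by
      rw [p.map_deg] at hs; exact hs i
    refine ⟨Quotient.mk Ω.ptSetoid ⟨a, ⟨s, hs'⟩⟩, ?_⟩
    refine (hFcomm ⟨a, ⟨s, hs'⟩⟩).trans ?_
    exact congrArg (Quotient.mk Λ.ptSetoid)
      (congrArg (Sigma.mk (p.toFun a)) (Subtype.ext rfl))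
  · -- local triviality
    intro x
    obtain ⟨w₀, rfl⟩ := Quotient.exists_rep x
    obtain ⟨b, t, hb⟩ := w₀
    -- construct the cell data
    have hfrac0 : ∀ i, 0 ≤ KGraph.frac t i := fun i => by
      rw [KGraph.frac_apply]
      have h1 : (⌊t i⌋₊ : ℝ) ≤ t i := Nat.floor_le (hb i).1
      linarith
    have hfrac1 : ∀ i, KGraph.frac t i < 1 := fun i => by
      rw [KGraph.frac_apply]
      have := Nat.lt_floor_add_one (t i); linarith
    set g : Fin k → ℝ :=
      fun i => if KGraph.frac t i = 0 then 1
        else min (KGraph.frac t i) (1 - KGraph.frac t i) with hg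
    set Sfin : Finset ℝ := insert 1 (Finset.image g Finset.univ) with hSfin
    have hSne : Sfin.Nonempty := ⟨1, Finset.mem_insert_self _ _⟩
    set μ : ℝ := Sfin.min' hSne with hμ
    have hμ1 : μ ≤ 1 := Finset.min'_le _ _ (Finset.mem_insert_self _ _)
    have hμg : ∀ i, μ ≤ g i := fun i => Finset.min'_le _ _
      (Finset.mem_insert_of_mem (Finset.mem_image_of_mem g (Finset.mem_univ i)))
    have hgpos : ∀ i, 0 < g i := fun i => by
      rw [hg]; dsimp only
      split_ifs with h
      · norm_num
      · have h1 : 0 < KGraph.frac t i := lt_of_le_of_ne (hfrac0 i) (Ne.symm h)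
        have h2 : KGraph.frac t i < 1 := hfrac1 i
        exact lt_min h1 (by linarith)
    have hμ0 : 0 < μ := by
      rw [hμ]
      apply (Finset.lt_min'_iff _ _).mpr
      intro y hy
      rcases Finset.mem_insert.mp hy with h | h
      · rw [h]; norm_num
      · obtain ⟨i, -, rfl⟩ := Finset.mem_image.mp h
        exact hgpos i
    have hετ : ∀ i, KGraph.frac t i ≠ 0 →
        2*(μ/4) ≤ KGraph.frac t i ∧ KGraph.frac t i ≤ 1 - 2*(μ/4) := by
      intro i hi
      have h1 := hμg i
      rw [hg] at h1; dsimp only at h1; rw [if_neg hi] at h1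
      have h2 : μ ≤ KGraph.frac t i := le_trans h1 (min_le_left _ _)
      have h3 : μ ≤ 1 - KGraph.frac t i := le_trans h1 (min_le_right _ _)
      constructor <;> linarith
    set D : KGraph.CellData k :=
      { τ := KGraph.frac t, ε := μ/4, hτ0 := hfrac0, hτ1 := hfrac1,
        hε0 := by linarith, hε4 := by linarith, hετ := hετ } with hD
    have hτrfl : D.τ = KGraph.frac t := rfl
    set c : Λ.Mor := Λ.seg b (KGraph.fl t) (KGraph.ce t) with hc
    have hdcd : Λ.deg c = D.dd := KGraph.deg_cell hb hτrfl
    set W : Set Λ.Points := Λ.star D c with hW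
    have hWsat : ∀ w w', w ∈ W → Λ.ptRel w' w → w' ∈ W := fun w w' hw hrel =>
      KGraph.star_saturated hw hrel
    have hWopen : IsOpen W := KGraph.star_open Λ D c
    set U : Set Λ.Real := Quotient.mk Λ.ptSetoid '' W with hU
    have hUopen : IsOpen U := by
      refine (KGraph.isOpen_real_iff _).mpr ?_
      have h := hWopen
      rw [← KGraph.sat_preimage_image hWsat] at h
      exact h
    have hxU : Quotient.mk Λ.ptSetoid ⟨b, ⟨t, hb⟩⟩ ∈ U :=
      ⟨⟨b, ⟨t, hb⟩⟩, KGraph.center_mem_star hb hτrfl, rfl⟩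
    refine ⟨U, hUopen, hxU, {c' : Ω.Mor // p.toFun c' = c},
      fun c' => Quotient.mk Ω.ptSetoid '' (Ω.star D c'.1), ?_, ?_, ?_⟩
    · -- preimage decomposition
      ext y
      obtain ⟨w, rfl⟩ := Quotient.exists_rep y
      simp only [Set.mem_preimage, Set.mem_iUnion, hFcomm w]
      show F (Quotient.mk Ω.ptSetoid w) ∈ U ↔ Quotient.mk Ω.ptSetoid w ∈
        ⋃ c' : {c' : Ω.Mor // p.toFun c' = c}, Quotient.mk Ω.ptSetoid '' (Ω.star D c'.1)
      rw [hFcomm w, Set.mem_iUnion]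
      constructor
      · intro hFy
        obtain ⟨w₂, hw₂, he⟩ := hFy
        have hpmW : p.pointMap w ∈ W :=
          KGraph.star_saturated hw₂ (Quotient.exact he.symm)
        obtain ⟨m, hseg, hm⟩ := hpmW
        obtain ⟨hA, hB, hC⟩ := KGraph.star_analysis hm
        have hmd : ∀ i, (m + D.dd) i ≤ Ω.deg w.1 i := fun i => by
          simp only [Pi.add_apply]
          have h1 := hB i
          have h2 := KGraph.point_ce_le_deg (p.pointMap w) i
          have h3 : Λ.deg (p.pointMap w).1 i = Ω.deg w.1 i :=
            congrFun (p.map_deg w.1) i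
          omega
        refine ⟨⟨Ω.seg w.1 m (m + D.dd), ?_⟩, w, ⟨m, rfl, hm⟩, rfl⟩
        rw [p.map_seg (fun i => by simp only [Pi.add_apply]; omega) hmd]
        exact hseg
      · rintro ⟨c', w', hw', he⟩
        have hwc' : w ∈ Ω.star D c'.1 :=
          KGraph.star_saturated hw' (Quotient.exact he.symm)
        exact ⟨p.pointMap w, KGraphHom.star_map c'.2 hwc', rfl⟩
    · -- pairwise disjointness
      intro i j hij
      rw [Function.onFun, Set.disjoint_left]
      rintro y ⟨w₁, hw₁, hy₁⟩ ⟨w₂, hw₂, hy₂⟩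
      have hrel : Ω.ptRel w₁ w₂ := Quotient.exact (hy₁.trans hy₂.symm)
      have hw₁j : w₁ ∈ Ω.star D j.1 := KGraph.star_saturated hw₂ hrel
      obtain ⟨m₁, hseg₁, hm₁⟩ := hw₁
      obtain ⟨m₂, hseg₂, hm₂⟩ := hw₁j
      have hA₁ := (KGraph.star_analysis hm₁).1
      have hA₂ := (KGraph.star_analysis hm₂).1
      have hmm : m₁ = m₂ := funext fun i' => by rw [hA₁ i', hA₂ i']
      exact hij (Subtype.ext (by rw [← hseg₁, ← hseg₂, hmm]))
    · -- each sheet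
      intro i
      have hVsat : ∀ w w', w ∈ Ω.star D i.1 → Ω.ptRel w' w → w' ∈ Ω.star D i.1 :=
        fun w w' hw hrel => KGraph.star_saturated hw hrel
      have hVopen : IsOpen (Quotient.mk Ω.ptSetoid '' (Ω.star D i.1)) := by
        refine (KGraph.isOpen_real_iff _).mpr ?_
        rw [KGraph.sat_preimage_image hVsat]
        exact KGraph.star_open Ω D i.1
      refine ⟨hVopen, ?_⟩
      have hVsub : ∀ y : (Quotient.mk Ω.ptSetoid '' (Ω.star D i.1) : Set Ω.Real),
          F y.1 ∈ U := by
        rintro ⟨y, w, hw, rfl⟩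
        rw [hFcomm]
        exact ⟨p.pointMap w, KGraphHom.star_map i.2 hw, rfl⟩
      set Φ : (Quotient.mk Ω.ptSetoid '' (Ω.star D i.1) : Set Ω.Real) → U :=
        fun y => ⟨F y.1, hVsub y⟩ with hΦ
      have hΦcont : Continuous Φ := Continuous.subtype_mk
        (F.continuous.comp continuous_subtype_val) _
      have hΦbij : Function.Bijective Φ := by
        constructor
        · rintro ⟨y₁, hy₁⟩ ⟨y₂, hy₂⟩ he
          obtain ⟨w₁, hw₁, rfl⟩ := hy₁
          obtain ⟨w₂, hw₂, rfl⟩ := hy₂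
          have hFe : F (Quotient.mk Ω.ptSetoid w₁) = F (Quotient.mk Ω.ptSetoid w₂) :=
            congrArg Subtype.val he
          rw [hFcomm, hFcomm] at hFe
          have hrel := KGraphHom.star_inj_points hp i.2 hw₁ hw₂ (Quotient.exact hFe)
          exact Subtype.ext (Quotient.sound hrel)
        · rintro ⟨u, w, hw, rfl⟩
          obtain ⟨w', hw', hpm⟩ := KGraphHom.star_lift hp i.2 hdcd hw
          refine ⟨⟨Quotient.mk Ω.ptSetoid w', ⟨w', hw', rfl⟩⟩, ?_⟩
          apply Subtype.ext
          show F (Quotient.mk Ω.ptSetoid w') = Quotient.mk Λ.ptSetoid w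
          rw [hFcomm, hpm]
      have hΦopen : IsOpenMap Φ := by
        intro O' hO'
        obtain ⟨O, hO, rfl⟩ := isOpen_induced_iff.mp hO'
        set S : Set Ω.Points := Quotient.mk Ω.ptSetoid ⁻¹' O ∩ Ω.star D i.1 with hS
        have hSopen : IsOpen S :=
          (hO.preimage KGraph.continuous_mk_real).inter (KGraph.star_open Ω D i.1)
        have hSsat : ∀ w w', w ∈ S → Ω.ptRel w' w → w' ∈ S := by
          rintro w w' ⟨hwO, hwst⟩ hrel
          refine ⟨?_, KGraph.star_saturated hwst hrel⟩
          change Quotient.mk Ω.ptSetoid w' ∈ O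
          rw [show Quotient.mk Ω.ptSetoid w' = Quotient.mk Ω.ptSetoid w from
              Quotient.sound hrel]
          exact hwO
        set T : Set Λ.Points := p.pointMap '' S with hT
        have hTopen : IsOpen T := KGraphHom.pointMap_isOpenMap p S hSopen
        have hTsat : ∀ w w', w ∈ T → Λ.ptRel w' w → w' ∈ T := by
          rintro wt wt' hwt hrel
          obtain ⟨w, hwS, rfl⟩ := hwt
          have hwstar : p.pointMap w ∈ W := KGraphHom.star_map i.2 hwS.2
          have hwt'W : wt' ∈ W := KGraph.star_saturated hwstar hrel
          obtain ⟨w'', hw''star, hpm⟩ := KGraphHom.star_lift hp i.2 hdcd hwt'W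
          have hrel'' : Ω.ptRel w'' w := KGraphHom.star_inj_points hp i.2
            hw''star hwS.2 (by rw [hpm]; exact hrel)
          exact ⟨w'', hSsat w w'' hwS hrel'', hpm⟩
        have hO₂ : IsOpen (Quotient.mk Λ.ptSetoid '' T) := by
          refine (KGraph.isOpen_real_iff _).mpr ?_
          rw [KGraph.sat_preimage_image hTsat]
          exact hTopen
        have himg : Φ '' (Subtype.val ⁻¹' O)
            = Subtype.val ⁻¹' (Quotient.mk Λ.ptSetoid '' T) := by
          ext u
          simp only [Set.mem_image, Set.mem_preimage]
          constructor
          · rintro ⟨⟨y, hyV⟩, hyO, rfl⟩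
            obtain ⟨w, hw, rfl⟩ := hyV
            show F (Quotient.mk Ω.ptSetoid w) ∈ Quotient.mk Λ.ptSetoid '' T
            rw [hFcomm w]
            exact Set.mem_image_of_mem _ ⟨w, ⟨hyO, hw⟩, rfl⟩
          · rintro ⟨wt, hwtT, hwtu⟩
            obtain ⟨w, hwS, rfl⟩ := hwtT
            refine ⟨⟨Quotient.mk Ω.ptSetoid w, ⟨w, hwS.2, rfl⟩⟩, hwS.1, ?_⟩
            apply Subtype.ext
            show F (Quotient.mk Ω.ptSetoid w) = u.1
            rw [hFcomm w]
            exact hwtu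
        rw [himg]
        exact hO₂.preimage continuous_subtype_val
      exact ⟨Equiv.toHomeomorphOfContinuousOpen
        (Equiv.ofBijective Φ hΦbij) hΦcont hΦopen, fun y => rfl⟩
end
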